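/- arXiv:2302.03077 — 12 statements merged into one kernel-verified Lean document; each statement's English description precedes it below -/
import Mathlib

section
/- Let A be a finite group and φ a permutation of A fixing the identity, with a function π : A → ℤ such that φ(ab) = φ(a)·φ^{π(a)}(b) for all a, b ∈ A. Then the set Ker φ = {x ∈ A : π(x) ≡ 1 (mod |φ|)} is a subgroup of A. -/
def IsSkewMorphism {A : Type*} [Group A] (φ : Equiv.Perm A) (π : A → ℤ) : Prop :=
  φ 1 = 1 ∧ ∀ a b : A, φ (a * b) = φ a * (φ ^ π a) b

def IsSmooth {A : Type*} [Group A] (φ : Equiv.Perm A) (π : A → ℤ) : Prop :=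
  ∀ a : A, π (φ a) ≡ π a [ZMOD (orderOf φ)]

theorem stmt0 {A : Type*} [Group A] [Fintype A] (φ : Equiv.Perm A) (π : A → ℤ)
    (h : IsSkewMorphism φ π) :
    ∃ H : Subgroup A, ∀ x : A, x ∈ H ↔ π x ≡ 1 [ZMOD (orderOf φ)] := by
  obtain ⟨h1, h2⟩ := h
  refine ⟨{
    carrier := {a | ∀ b, φ (a * b) = φ a * φ b}
    one_mem' := by intro b; simp [h1]
    mul_mem' := by
      intro a b ha hb c
      calc φ (a * b * c) = φ (a * (b * c)) := by rw [mul_assoc]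
        _ = φ a * (φ b * φ c) := by rw [ha, hb]
        _ = φ (a * b) * φ c := by rw [ha, mul_assoc]
    inv_mem' := by
      intro a ha
      have hinv : φ a⁻¹ = (φ a)⁻¹ := by
        have := ha a⁻¹
        rw [mul_inv_cancel, h1] at this
        exact eq_inv_of_mul_eq_one_right this.symm
      intro b
      have := ha (a⁻¹ * b)
      rw [← mul_assoc, mul_inv_cancel, one_mul] at this
      rw [hinv, eq_inv_mul_iff_mul_eq, ← this] }, ?_⟩
  intro x
  constructor
  · intro hx
    have hpow : φ ^ π x = φ ^ (1 : ℤ) := by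
      ext b
      have h3 := h2 x b
      rw [hx b] at h3
      have := mul_left_cancel h3.symm
      simpa using this
    simpa using zpow_eq_zpow_iff_modEq.mp hpow
  · intro hx b
    have hpow : φ ^ π x = φ ^ (1 : ℤ) := zpow_eq_zpow_iff_modEq.mpr (by simpa using hx)
    rw [h2, hpow, zpow_one]
end

section
/- Let φ be a skew morphism of a finite group A with power function π. For all a, b ∈ A, π(a) ≡ π(b) (mod |φ|) if and only if ab⁻¹ ∈ Ker φ. -/
theorem stmt1 {A : Type*} [Group A] [Fintype A] (φ : Equiv.Perm A) (π : A → ℤ)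
    (h : IsSkewMorphism φ π) (a b : A) :
    π a ≡ π b [ZMOD (orderOf φ)] ↔ π (a * b⁻¹) ≡ 1 [ZMOD (orderOf φ)] := by
  obtain ⟨h1, h2⟩ := h
  set P : Prop := ∀ c : A, φ (a * c) * (φ (b * c))⁻¹ = φ a * (φ b)⁻¹ with hP
  have h1' : (π a ≡ π b [ZMOD (orderOf φ)]) ↔ P := by
    rw [← zpow_eq_zpow_iff_modEq]
    constructor
    · intro he c
      rw [h2 a c, h2 b c, he]
      group
    · intro hp
      ext c
      have hth := hp c
      rw [h2 a c, h2 b c] at hth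
      set X := (φ ^ π a) c with hX
      set Y := (φ ^ π b) c with hY
      have hxy : X * Y⁻¹ = 1 := by
        calc X * Y⁻¹ = (φ a)⁻¹ * (φ a * X * (φ b * Y)⁻¹) * φ b := by group
          _ = (φ a)⁻¹ * (φ a * (φ b)⁻¹) * φ b := by rw [hth]
          _ = 1 := by group
      exact mul_inv_eq_one.mp hxy
  have h2' : (π (a * b⁻¹) ≡ 1 [ZMOD (orderOf φ)]) ↔ P := by
    set k := a * b⁻¹ with hk
    have hkb : ∀ c : A, k * (b * c) = a * c := by intro c; rw [hk]; group
    rw [← zpow_eq_zpow_iff_modEq (m := π k) (n := 1), zpow_one]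
    constructor
    · intro he c
      have hac : φ (a * c) = φ k * φ (b * c) := by
        have := h2 k (b * c)
        rw [he, hkb c] at this
        exact this
      have ha1 : φ (a * 1) = φ k * φ (b * 1) := by
        have := h2 k (b * 1)
        rw [he, hkb 1] at this
        exact this
      rw [mul_one, mul_one] at ha1
      have hc : φ k = φ a * (φ b)⁻¹ := by rw [ha1]; group
      rw [hac, hc]; group
    · intro hp
      have hc : φ k = φ a * (φ b)⁻¹ := by
        have h0 := hp b⁻¹
        rw [show a * b⁻¹ = k from rfl, show b * b⁻¹ = (1:A) by group, h1] at h0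
        rw [← h0]; group
      ext y
      have hth := hp (b⁻¹ * y)
      rw [show a * (b⁻¹ * y) = k * y by rw [hk]; group,
          show b * (b⁻¹ * y) = y by group, h2 k y, hc] at hth
      set X := (φ ^ π k) y with hX
      have hxy : X * (φ y)⁻¹ = 1 := by
        calc X * (φ y)⁻¹ = (φ a * (φ b)⁻¹)⁻¹ * (φ a * (φ b)⁻¹ * X * (φ y)⁻¹) := by group
          _ = (φ a * (φ b)⁻¹)⁻¹ * (φ a * (φ b)⁻¹) := by rw [hth]
          _ = 1 := by group
      exact mul_inv_eq_one.mp hxy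
  rw [h1', h2']
end

section
/- Let φ and ψ be skew morphisms of finite groups A and B with power functions π_φ and π_ψ, and suppose the direct product φ × ψ (acting coordinatewise on A × B) is a skew morphism of A × B. Then φ × ψ is smooth if and only if both φ and ψ are smooth. -/
private def prodPermHom {A B : Type*} : Equiv.Perm A × Equiv.Perm B →* Equiv.Perm (A × B) where
  toFun p := Equiv.prodCongr p.1 p.2
  map_one' := rfl
  map_mul' _ _ := rfl

private lemma prodCongr_zpow' {A B : Type*} (φ : Equiv.Perm A) (ψ : Equiv.Perm B) (n : ℤ) :
    (Equiv.prodCongr φ ψ) ^ n = Equiv.prodCongr (φ ^ n) (ψ ^ n) :=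
  (map_zpow prodPermHom (φ, ψ) n).symm

private lemma prodCongr_pow' {A B : Type*} (φ : Equiv.Perm A) (ψ : Equiv.Perm B) (n : ℕ) :
    (Equiv.prodCongr φ ψ) ^ n = Equiv.prodCongr (φ ^ n) (ψ ^ n) :=
  (map_pow prodPermHom (φ, ψ) n).symm

/-- If φ^m = φ^n pointwise then m ≡ n mod orderOf φ. -/
private lemma modeq_of_zpow_eq {A : Type*} [Group A] (φ : Equiv.Perm A) {m n : ℤ}
    (hmn : φ ^ m = φ ^ n) : m ≡ n [ZMOD (orderOf φ)] := by
  rw [Int.modEq_comm, Int.modEq_iff_dvd]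
  rw [orderOf_dvd_iff_zpow_eq_one, zpow_sub, hmn, mul_inv_cancel]

theorem stmt5 {A B : Type*} [Group A] [Group B] [Fintype A] [Fintype B]
    (φ : Equiv.Perm A) (ψ : Equiv.Perm B) (πφ : A → ℤ) (πψ : B → ℤ) (π : A × B → ℤ)
    (hφ : IsSkewMorphism φ πφ) (hψ : IsSkewMorphism ψ πψ)
    (h : IsSkewMorphism (Equiv.prodCongr φ ψ) π) :
    IsSmooth (Equiv.prodCongr φ ψ) π ↔ IsSmooth φ πφ ∧ IsSmooth ψ πψ := by
  -- Zhang's lemma, A-side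
  have keyA : ∀ (a : A) (b : B), π (a, b) ≡ πφ a [ZMOD (orderOf φ)] := by
    intro a b
    apply modeq_of_zpow_eq
    ext c
    have h1 := h.2 (a, b) (c, 1)
    rw [prodCongr_zpow'] at h1
    have h2 := hφ.2 a c
    have := congrArg Prod.fst h1
    simp only [Equiv.prodCongr_apply, Prod.map, Prod.mk_mul_mk, Prod.fst] at this
    rw [h2] at this
    exact (mul_left_cancel this).symm
  have keyB : ∀ (a : A) (b : B), π (a, b) ≡ πψ b [ZMOD (orderOf ψ)] := by
    intro a b
    apply modeq_of_zpow_eq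
    ext c
    have h1 := h.2 (a, b) (1, c)
    rw [prodCongr_zpow'] at h1
    have h2 := hψ.2 b c
    have := congrArg Prod.snd h1
    simp only [Equiv.prodCongr_apply, Prod.map, Prod.mk_mul_mk, Prod.snd] at this
    rw [h2] at this
    exact (mul_left_cancel this).symm
  have hdvdA : orderOf φ ∣ orderOf (Equiv.prodCongr φ ψ) := by
    apply orderOf_dvd_of_pow_eq_one
    have := pow_orderOf_eq_one (Equiv.prodCongr φ ψ)
    rw [prodCongr_pow'] at this
    ext a
    simpa using congrArg (fun e => (e (a, (1 : B))).1) this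
  have hdvdB : orderOf ψ ∣ orderOf (Equiv.prodCongr φ ψ) := by
    apply orderOf_dvd_of_pow_eq_one
    have := pow_orderOf_eq_one (Equiv.prodCongr φ ψ)
    rw [prodCongr_pow'] at this
    ext b
    simpa using congrArg (fun e => (e ((1 : A), b)).2) this
  have hdvdN : orderOf (Equiv.prodCongr φ ψ) ∣ Nat.lcm (orderOf φ) (orderOf ψ) := by
    apply orderOf_dvd_of_pow_eq_one
    rw [prodCongr_pow',
      orderOf_dvd_iff_pow_eq_one.mp (Nat.dvd_lcm_left _ _),
      orderOf_dvd_iff_pow_eq_one.mp (Nat.dvd_lcm_right _ _)]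
    rfl
  constructor
  · intro hs
    constructor
    · intro a
      have c1 : π (φ a, ψ 1) ≡ π (a, 1) [ZMOD (orderOf φ)] :=
        (hs (a, 1)).of_dvd (Int.natCast_dvd_natCast.mpr hdvdA)
      rw [hψ.1] at c1
      calc πφ (φ a) ≡ π (φ a, 1) [ZMOD (orderOf φ)] := (keyA (φ a) 1).symm
        _ ≡ π (a, 1) [ZMOD (orderOf φ)] := c1
        _ ≡ πφ a [ZMOD (orderOf φ)] := keyA a 1
    · intro b
      have c1 : π (φ 1, ψ b) ≡ π (1, b) [ZMOD (orderOf ψ)] :=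
        (hs (1, b)).of_dvd (Int.natCast_dvd_natCast.mpr hdvdB)
      rw [hφ.1] at c1
      calc πψ (ψ b) ≡ π (1, ψ b) [ZMOD (orderOf ψ)] := (keyB 1 (ψ b)).symm
        _ ≡ π (1, b) [ZMOD (orderOf ψ)] := c1
        _ ≡ πψ b [ZMOD (orderOf ψ)] := keyB 1 b
  · rintro ⟨hA, hB⟩ ⟨a, b⟩
    -- goal : π ((Equiv.prodCongr φ ψ) (a,b)) ≡ π (a,b) [ZMOD orderOf (prodCongr φ ψ)]
    have modA : π (φ a, ψ b) ≡ π (a, b) [ZMOD (orderOf φ)] :=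
      ((keyA (φ a) (ψ b)).trans (hA a)).trans (keyA a b).symm
    have modB : π (φ a, ψ b) ≡ π (a, b) [ZMOD (orderOf ψ)] :=
      ((keyB (φ a) (ψ b)).trans (hB b)).trans (keyB a b).symm
    have d1 : (orderOf φ : ℤ) ∣ π (a, b) - π (φ a, ψ b) := Int.ModEq.dvd modA
    have d2 : (orderOf ψ : ℤ) ∣ π (a, b) - π (φ a, ψ b) := Int.ModEq.dvd modB
    have dl : (Nat.lcm (orderOf φ) (orderOf ψ) : ℤ) ∣ π (a, b) - π (φ a, ψ b) := by
      have := Int.coe_lcm_dvd_iff.mpr ⟨d1, d2⟩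
      simpa [Int.lcm] using this
    have dN : (orderOf (Equiv.prodCongr φ ψ) : ℤ) ∣ π (a, b) - π (φ a, ψ b) :=
      dvd_trans (Int.natCast_dvd_natCast.mpr hdvdN) dl
    show π ((Equiv.prodCongr φ ψ) (a, b)) ≡ π (a, b) [ZMOD _]
    simpa [Equiv.prodCongr_apply] using Int.modEq_iff_dvd.mpr dN
end

section
/- Let p be an odd prime and e ≥ 2 an integer. Define φ : ℤ_{p^e} → ℤ_{p^e} by φ(x) = −x − p^{e−1}·x(x−1)/2 (mod p^e), and π : ℤ_{p^e} → ℤ by π(x) = 1 − 2x (mod 2p). Then φ is a permutation of ℤ_{p^e} fixing 0, φ has order 2p, φ(x+y) = φ(x) + φ^{π(x)}(y) for all x, y ∈ ℤ_{p^e} (so φ is a skew morphism of ℤ_{p^e} with power function π), and φ is not smooth, i.e., there exists x with π(φ(x)) ≢ π(x) (mod 2p). -/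
def IsAddSkewMorphism {A : Type*} [AddGroup A] (φ : Equiv.Perm A) (π : A → ℤ) : Prop :=
  φ 0 = 0 ∧ ∀ x y : A, φ (x + y) = φ x + (φ ^ π x) y

def IsAddSmooth {A : Type*} [AddGroup A] (φ : Equiv.Perm A) (π : A → ℤ) : Prop :=
  ∀ x : A, π (φ x) ≡ π x [ZMOD (orderOf φ)]

theorem stmt7 (p : ℕ) (hp : p.Prime) (hp2 : p ≠ 2) (e : ℕ) (he : 2 ≤ e) :
    ∃ φ : Equiv.Perm (ZMod (p ^ e)),
      (∀ x : ZMod (p ^ e),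
        φ x = -x - (p : ZMod (p ^ e)) ^ (e - 1) * (x * (x - 1)) * (2 : ZMod (p ^ e))⁻¹) ∧
      IsAddSkewMorphism φ (fun x => 1 - 2 * (x.val : ℤ)) ∧
      orderOf φ = 2 * p ∧
      ∃ x : ZMod (p ^ e),
        ¬ ((1 - 2 * (((φ x).val : ℤ))) ≡ (1 - 2 * ((x.val : ℤ))) [ZMOD ((2 * p : ℕ))]) := by
  haveI : NeZero (p ^ e) := ⟨pow_ne_zero e hp.pos.ne'⟩
  set n := p ^ e with hn
  set c : ZMod n := (p : ZMod n) ^ (e - 1) with hcdef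
  set u : ZMod n := (2 : ZMod n)⁻¹ with hudef
  -- key relations
  have hc : c * c = 0 := by
    have h1 : c * c = ((p ^ (e - 1) * p ^ (e - 1) : ℕ) : ZMod n) := by push_cast; ring
    rw [h1, ZMod.natCast_eq_zero_iff, ← pow_add]
    exact pow_dvd_pow p (by omega)
  have hu : (2 : ZMod n) * u = 1 := by
    apply ZMod.mul_inv_of_unit
    have : ((2 : ℕ) : ZMod n) = (2 : ZMod n) := by push_cast; ring
    rw [← this, ZMod.isUnit_iff_coprime]
    exact Nat.Coprime.pow_right e ((Nat.coprime_primes Nat.prime_two hp).mpr (fun h => hp2 h.symm))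
  have hcne : c ≠ 0 := by
    intro h
    rw [hcdef, ← Nat.cast_pow, ZMod.natCast_eq_zero_iff] at h
    have h2 := Nat.le_of_dvd (pow_pos hp.pos _) h
    have h3 : p ^ (e - 1) < p ^ e := Nat.pow_lt_pow_right hp.one_lt (by omega)
    omega
  have hpc : (p : ZMod n) * c = 0 := by
    have h1 : (p : ZMod n) * c = (p : ZMod n) ^ e := by
      rw [hcdef, ← pow_succ']
      congr 1
      omega
    rw [h1, ← Nat.cast_pow, ← hn, ZMod.natCast_self]
  -- the function and its inverse
  set f : ZMod n → ZMod n := fun x => -x - c * (x * (x - 1)) * u with hfdef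
  set g : ZMod n → ZMod n := fun y => f ((1 + c) * y) with hgdef
  have hA : ∀ x, g (f x) = x := by
    intro x
    show f ((1 + c) * f x) = x
    simp only [hfdef]
    linear_combination ((-2)*x*u + x*u^2 + x*c*u^2 + (-1)*x^2*u + x^2*u^2 + (-1)*x^2*c*u +
      3*x^2*c*u^2 + (-1)*x^2*c*u^3 + 2*x^2*c^2*u^2 + (-2)*x^2*c^2*u^3 + (-1)*x^2*c^3*u^3 +
      (-2)*x^3*u^2 + (-4)*x^3*c*u^2 + 2*x^3*c*u^3 + (-2)*x^3*c^2*u^2 + 4*x^3*c^2*u^3 +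
      2*x^3*c^3*u^3 + (-1)*x^4*c*u^3 + (-2)*x^4*c^2*u^3 + (-1)*x^4*c^3*u^3) * hc +
      ((-1)*x*c) * hu
  have hB : ∀ y, f (g y) = y := by
    intro y
    show f (f ((1 + c) * y)) = y
    simp only [hfdef]
    linear_combination ((-2)*y*u + y*u^2 + y*c*u^2 + y^2*u^2 + 2*y^2*c*u^2 + (-1)*y^2*c*u^3 +
      y^2*c^2*u^2 + (-2)*y^2*c^2*u^3 + (-1)*y^2*c^3*u^3 + (-2)*y^3*u^2 + (-6)*y^3*c*u^2 +
      2*y^3*c*u^3 + (-6)*y^3*c^2*u^2 + 6*y^3*c^2*u^3 + (-2)*y^3*c^3*u^2 + 6*y^3*c^3*u^3 +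
      2*y^3*c^4*u^3 + (-1)*y^4*c*u^3 + (-4)*y^4*c^2*u^3 + (-6)*y^4*c^3*u^3 +
      (-4)*y^4*c^4*u^3 + (-1)*y^4*c^5*u^3) * hc + ((-1)*y*c) * hu
  set φ : Equiv.Perm (ZMod n) := ⟨f, g, hA, hB⟩ with hφdef
  have hφapp : ∀ x, φ x = f x := fun _ => rfl
  -- φ ∘ φ is multiplication by (1 - c)
  have hC : ∀ x, φ (φ x) = (1 - c) * x := by
    intro x
    show f (f x) = (1 - c) * x
    simp only [hfdef]
    linear_combination (x*u^2 + x^2*u^2 + (-1)*x^2*c*u^3 + (-2)*x^3*u^2 + 2*x^3*c*u^3 +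
      (-1)*x^4*c*u^3) * hc + ((-1)*x*c) * hu
  -- binomial for square-zero elements
  have hbin : ∀ d : ZMod n, d * d = 0 → ∀ k : ℕ, (1 + d) ^ k = 1 + (k : ZMod n) * d := by
    intro d hd k
    induction k with
    | zero => simp
    | succ k ih =>
      rw [pow_succ, ih]
      push_cast
      linear_combination ((k : ZMod n)) * hd
  have hsq : ∀ k : ℕ, ∀ x, ((φ * φ) ^ k) x = (1 - c) ^ k * x := by
    intro k
    induction k with
    | zero => intro x; simp
    | succ k ih =>
      intro x
      rw [pow_succ, Equiv.Perm.mul_apply, Equiv.Perm.mul_apply, hC, ih, pow_succ]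
      ring
  have hφ2 : ∀ x, (φ ^ 2) x = (1 - c) * x := by
    intro x; rw [pow_two, Equiv.Perm.mul_apply]; exact hC x
  -- order of φ
  have h2p : φ ^ (2 * p) = 1 := by
    ext x
    rw [pow_mul, pow_two, hsq p x]
    have : (1 - c : ZMod n) ^ p = 1 := by
      have := hbin (-c) (by linear_combination hc) p
      rw [show (1 : ZMod n) + -c = 1 - c by ring] at this
      rw [this]
      linear_combination -hpc
    rw [this, one_mul]
    simp
  have hord_dvd : orderOf φ ∣ 2 * p := orderOf_dvd_of_pow_eq_one h2p
  have hφ2ne : φ ^ 2 ≠ 1 := by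
    intro h
    have := hφ2 1
    rw [h] at this
    simp only [Equiv.Perm.one_apply, mul_one] at this
    exact hcne (by linear_combination this)
  -- the reduction map to ZMod p
  have hpdvd : p ∣ n := dvd_pow_self p (by omega : e ≠ 0)
  set ψ : ZMod n →+* ZMod p := ZMod.castHom hpdvd (ZMod p) with hψdef
  have hψc : ψ c = 0 := by
    rw [hcdef, map_pow, map_natCast, ZMod.natCast_self, zero_pow (by omega : e - 1 ≠ 0)]
  have h2Zp : (2 : ZMod p) ≠ 0 := by
    intro h
    have : ((2 : ℕ) : ZMod p) = 0 := by push_cast; exact h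
    rw [ZMod.natCast_eq_zero_iff] at this
    have := Nat.le_of_dvd (by norm_num) this
    have := hp.two_le
    omega
  have hφpne : φ ^ p ≠ 1 := by
    obtain ⟨m, hm⟩ := hp.odd_of_ne_two hp2
    intro h
    have hval : (φ ^ p) 1 = -1 + (m : ZMod n) * c := by
      rw [hm, pow_succ, Equiv.Perm.mul_apply, pow_mul, pow_two, hsq m (φ 1)]
      have h1 : φ (1 : ZMod n) = -1 := by
        rw [hφapp]; show -1 - c * (1 * (1 - 1)) * u = -1; ring
      rw [h1]
      have := hbin (-c) (by linear_combination hc) m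
      rw [show (1 : ZMod n) + -c = 1 - c by ring] at this
      rw [this]
      ring
    rw [h] at hval
    simp only [Equiv.Perm.one_apply] at hval
    have := congrArg ψ hval
    rw [map_add, map_neg, map_one, map_mul, hψc, mul_zero, add_zero] at this
    exact h2Zp (by linear_combination this)
  have hord : orderOf φ = 2 * p := by
    have hcop : Nat.Coprime 2 p := (Nat.coprime_primes Nat.prime_two hp).mpr (fun h => hp2 h.symm)
    have h2d : 2 ∣ orderOf φ := by
      by_contra h
      have hcd : Nat.Coprime 2 (orderOf φ) := (Nat.prime_two.coprime_iff_not_dvd).mpr h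
      have : orderOf φ ∣ p := (Nat.Coprime.dvd_of_dvd_mul_left hcd.symm) hord_dvd
      exact hφpne (orderOf_dvd_iff_pow_eq_one.mp this)
    have hpd : p ∣ orderOf φ := by
      by_contra h
      have hcd : Nat.Coprime p (orderOf φ) := (hp.coprime_iff_not_dvd).mpr h
      have : orderOf φ ∣ 2 := by
        have := hord_dvd
        rw [mul_comm] at this
        exact (Nat.Coprime.dvd_of_dvd_mul_left hcd.symm) this
      exact hφ2ne (orderOf_dvd_iff_pow_eq_one.mp this)
    exact Nat.dvd_antisymm hord_dvd (Nat.Coprime.mul_dvd_of_dvd_of_dvd hcop h2d hpd)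
  -- skew morphism property
  have hval_cast : ∀ a : ZMod n, ((a.val : ℕ) : ZMod n) = a := by
    intro a; rw [ZMod.natCast_val, ZMod.cast_id]
  have hinvpow : ∀ v : ℕ, ∀ y : ZMod n, (((φ ^ 2)⁻¹) ^ v) y = (1 + c) ^ v * y := by
    intro v
    induction v with
    | zero => intro y; simp
    | succ v ih =>
      intro y
      rw [pow_succ, Equiv.Perm.mul_apply]
      have hinv : (φ ^ 2)⁻¹ y = (1 + c) * y := by
        have h2' : (φ ^ 2) ((1 + c) * y) = y := by
          rw [hφ2]
          linear_combination (-y) * hc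
        calc (φ ^ 2)⁻¹ y = (φ ^ 2)⁻¹ ((φ ^ 2) ((1 + c) * y)) := by rw [h2']
          _ = (1 + c) * y := Equiv.symm_apply_apply _ _
      rw [hinv, ih, pow_succ]
      ring
  have hzpow : ∀ x y : ZMod n, (φ ^ (1 - 2 * (x.val : ℤ))) y = f ((1 + x * c) * y) := by
    intro x y
    have h1 : (1 - 2 * (x.val : ℤ)) = 1 + (-2) * (x.val : ℤ) := by ring
    rw [h1, zpow_add, zpow_one, zpow_mul]
    have h2 : φ ^ (-2 : ℤ) = (φ ^ 2)⁻¹ := by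
      rw [zpow_neg]
      norm_cast
    rw [h2, zpow_natCast, Equiv.Perm.mul_apply, hinvpow, hbin c hc, hval_cast, hφapp]
  refine ⟨φ, fun x => rfl, ⟨?_, ?_⟩, hord, ⟨1, ?_⟩⟩
  · show f 0 = 0
    simp only [hfdef]; ring
  · intro x y
    rw [hφapp, hφapp]
    show f (x + y) = f x + (φ ^ (1 - 2 * (x.val : ℤ))) y
    rw [hzpow x y]
    simp only [hfdef]
    linear_combination ((-1)*x*y*u + 2*x*y^2*u + x^2*y^2*c*u) * hc + ((-1)*x*y*c) * hu
  · -- non-smoothness at x = 1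
    intro hmod
    have hφ1 : φ (1 : ZMod n) = -1 := by
      rw [hφapp]; show -1 - c * (1 * (1 - 1)) * u = -1; ring
    have hdvd := Int.ModEq.dvd hmod
    set A : ℕ := (φ (1 : ZMod n)).val with hA'
    set B : ℕ := ((1 : ZMod n)).val with hB'
    have h2 : (2 * p : ℤ) ∣ 2 * ((A : ℤ) - (B : ℤ)) := by
      have : (1 - 2 * (B : ℤ)) - (1 - 2 * (A : ℤ)) = 2 * ((A : ℤ) - (B : ℤ)) := by ring
      rw [← this]
      exact_mod_cast hdvd
    have hpd : (p : ℤ) ∣ ((A : ℤ) - (B : ℤ)) :=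
      (mul_dvd_mul_iff_left (two_ne_zero)).mp h2
    have hz : (((A : ℤ) - (B : ℤ) : ℤ) : ZMod p) = 0 :=
      (ZMod.intCast_zmod_eq_zero_iff_dvd _ p).mpr hpd
    push_cast at hz
    have hcastA : ((A : ℕ) : ZMod p) = ψ (φ 1) := by
      rw [hA', ZMod.natCast_val, ZMod.castHom_apply]
    have hcastB : ((B : ℕ) : ZMod p) = ψ 1 := by
      rw [hB', ZMod.natCast_val, ZMod.castHom_apply]
    rw [hcastA, hcastB, hφ1, map_neg, map_one] at hz
    exact h2Zp (by linear_combination -hz)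
end

section
/- Let e ≥ 5 be an integer. Define φ : ℤ_{2^e} → ℤ_{2^e} by φ(x) = −x − 2^{e−3}·x(x−1) (mod 2^e), and π(x) = 1 − 2x (mod 8). Then φ is a skew morphism of ℤ_{2^e} of order 8 with power function π, and φ is not smooth: there exists x with π(φ(x)) ≢ π(x) (mod 8). -/
theorem stmt8 (e : ℕ) (he : 5 ≤ e) :
    ∃ φ : Equiv.Perm (ZMod (2 ^ e)),
      (∀ x : ZMod (2 ^ e),
        φ x = -x - (2 : ZMod (2 ^ e)) ^ (e - 3) * (x * (x - 1))) ∧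
      IsAddSkewMorphism φ (fun x => 1 - 2 * (x.val : ℤ)) ∧
      orderOf φ = 8 ∧
      ∃ x : ZMod (2 ^ e),
        ¬ ((1 - 2 * (((φ x).val : ℤ))) ≡ (1 - 2 * ((x.val : ℤ))) [ZMOD (8 : ℕ)]) := by
  haveI : NeZero (2 ^ e) := ⟨by positivity⟩
  set n : ℕ := 2 ^ e with hn
  set c : ZMod n := (2 : ZMod n) ^ (e - 3) with hc
  set d : ZMod n := (2 : ZMod n) ^ (e - 2) with hd
  -- basic power facts
  have h2e : (2 : ZMod n) ^ e = 0 := by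
    have : ((2 ^ e : ℕ) : ZMod n) = 0 := ZMod.natCast_self _
    push_cast at this
    exact this
  have h2c : d = 2 * c := by
    rw [hc, hd]
    have h1 : e - 2 = (e - 3) + 1 := by omega
    rw [h1, pow_succ]
    ring
  have hcd : c * d = 0 := by
    rw [hc, hd, ← pow_add]
    have h1 : (e - 3) + (e - 2) = e + (e - 5) := by omega
    rw [h1, pow_add, h2e, zero_mul]
  have hd2 : d * d = 0 := by
    rw [hd, ← pow_add]
    have h1 : (e - 2) + (e - 2) = e + (e - 4) := by omega
    rw [h1, pow_add, h2e, zero_mul]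
  have h4d : 4 * d = 0 := by
    have : (4 : ZMod n) = 2 ^ 2 := by norm_num
    rw [this, hd, ← pow_add]
    have h1 : 2 + (e - 2) = e := by omega
    rw [h1, h2e]
  have hc2 : ∀ x : ZMod n, c * c * (x * (x - 1)) = 0 := by
    intro x
    obtain ⟨a, rfl⟩ := ZMod.intCast_surjective x
    obtain ⟨t, ht⟩ := Int.even_mul_succ_self (a - 1)
    have ha : a * (a - 1) = 2 * t := by linarith [ht]
    have : ((a : ZMod n) * ((a : ZMod n) - 1)) = 2 * (t : ZMod n) := by
      have := congrArg (fun z : ℤ => (z : ZMod n)) ha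
      push_cast at this
      linear_combination this
    rw [this]
    rw [hc]
    have key : (2:ZMod n) ^ (e-3) * (2:ZMod n)^(e-3) * 2 = 0 := by
      rw [← pow_add, ← pow_succ]
      have h1 : (e - 3) + (e - 3) + 1 = e + (e - 5) := by omega
      rw [h1, pow_add, h2e, zero_mul]
    calc (2:ZMod n)^(e-3) * (2:ZMod n)^(e-3) * (2 * (t:ZMod n))
        = ((2:ZMod n)^(e-3) * (2:ZMod n)^(e-3) * 2) * (t : ZMod n) := by ring
      _ = 0 := by rw [key, zero_mul]
  -- the function
  set f : ZMod n → ZMod n := fun x => -x - c * (x * (x - 1)) with hf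
  have L1 : ∀ x : ZMod n, f (f x) = (1 - d) * x := by
    intro x
    show -(-x - c * (x * (x - 1))) - c * ((-x - c * (x * (x - 1))) * ((-x - c * (x * (x - 1))) - 1)) = (1 - d) * x
    linear_combination x * h2c - (2*x + c*(x*(x-1)) + 1) * hc2 x
  have L2 : ∀ x y : ZMod n, f (x + y) = f x + f ((1 + d * x) * y) := by
    intro x y
    show -(x+y) - c * ((x+y) * ((x+y) - 1)) =
      (-x - c * (x * (x - 1))) + (-((1 + d*x)*y) - c * (((1 + d*x)*y) * (((1 + d*x)*y) - 1)))
    linear_combination x*y*h2c + (2*x*y^2 + d*x^2*y^2 - x*y) * hcd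
  -- unit facts
  have hu : (1 - d) * (1 + d) = 1 := by linear_combination -hd2
  have hinj : Function.Injective f := by
    intro a b hab
    have h2 : (1 - d) * a = (1 - d) * b := by rw [← L1, ← L1, hab]
    have := congrArg (fun z => (1 + d) * z) h2
    calc a = (1 + d) * ((1 - d) * a) := by linear_combination a * hd2
      _ = (1 + d) * ((1 - d) * b) := this
      _ = b := by linear_combination -b * hd2
  have hbij : Function.Bijective f := Finite.injective_iff_bijective.mp hinj
  refine ⟨Equiv.ofBijective f hbij, fun x => rfl, ?_, ?_, ?_⟩
  · -- skew morphism
    set φ : Equiv.Perm (ZMod n) := Equiv.ofBijective f hbij with hφ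
    have happ : ∀ x, φ x = f x := fun x => rfl
    have hsq : ∀ y : ZMod n, (φ ^ 2) y = (1 - d) * y := by
      intro y
      rw [pow_two, Equiv.Perm.mul_apply, happ, happ, L1]
    have hsqinv : ∀ y : ZMod n, ((φ ^ 2)⁻¹) y = (1 + d) * y := by
      intro y
      apply (φ ^ 2).injective
      rw [← Equiv.Perm.mul_apply, mul_inv_cancel, Equiv.Perm.one_apply, hsq]
      linear_combination y * hd2
    have hsqinvpow : ∀ (v : ℕ) (y : ZMod n), (((φ ^ 2)⁻¹) ^ v) y = (1 + (v : ZMod n) * d) * y := by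
      intro v
      induction v with
      | zero => intro y; simp
      | succ k ih =>
        intro y
        rw [pow_succ', Equiv.Perm.mul_apply, hsqinv, ih]
        push_cast
        linear_combination (k : ZMod n) * y * hd2
    constructor
    · rw [happ]; show -(0:ZMod n) - c * (0 * (0-1)) = 0; ring
    · intro x y
      have hzp : φ ^ ((1 : ℤ) - 2 * (x.val : ℤ)) = φ * ((φ ^ 2)⁻¹) ^ (x.val : ℕ) := by
        have : ((φ ^ 2)⁻¹ : Equiv.Perm (ZMod n)) ^ (x.val : ℕ)
            = φ ^ (-(2 * (x.val : ℤ))) := by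
          rw [← zpow_natCast ((φ ^ 2)⁻¹) x.val, ← zpow_neg_one (φ ^ 2), ← zpow_natCast φ 2]
          rw [← zpow_mul, ← zpow_mul]
          congr 1
          ring
        rw [this, sub_eq_add_neg, ← zpow_one_add]
      rw [hzp, Equiv.Perm.mul_apply, hsqinvpow, happ, happ]
      have hxv : ((x.val : ℕ) : ZMod n) = x := ZMod.natCast_rightInverse x
      rw [hxv]
      have := L2 x y
      rw [this]
      congr 2
      ring
  · -- order
    set φ : Equiv.Perm (ZMod n) := Equiv.ofBijective f hbij with hφ
    have hsq : ∀ y : ZMod n, (φ ^ 2) y = (1 - d) * y := by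
      intro y
      rw [pow_two, Equiv.Perm.mul_apply]
      exact L1 y
    have hsqpow : ∀ (k : ℕ) (y : ZMod n), ((φ ^ 2) ^ k) y = (1 - d) ^ k * y := by
      intro k
      induction k with
      | zero => intro y; simp
      | succ m ih =>
        intro y
        rw [pow_succ', Equiv.Perm.mul_apply, hsq, ih]
        ring
    have h8 : φ ^ 8 = 1 := by
      ext y
      have : φ ^ 8 = (φ ^ 2) ^ 4 := by rw [← pow_mul]
      rw [this, hsqpow]
      simp only [Equiv.Perm.one_apply]
      linear_combination (6 - 4*d + d*d) * y * hd2 - y * h4d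
    have h4 : φ ^ 4 ≠ 1 := by
      intro hcon
      have h1 : (φ ^ 4) (1 : ZMod n) = 1 := by rw [hcon]; rfl
      have h2 : (φ ^ 4) (1 : ZMod n) = (1 - d) ^ 2 * 1 := by
        have : φ ^ 4 = (φ ^ 2) ^ 2 := by rw [← pow_mul]
        rw [this, hsqpow]
      have h3 : 2 * d = 0 := by
        have := h1
        rw [h2] at this
        linear_combination hd2 - this
      have h4' : (2 : ZMod n) ^ (e - 1) = 0 := by
        have h5 : e - 1 = 1 + (e - 2) := by omega
        rw [h5, pow_add, pow_one, ← hd]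
        exact h3
      have h6 : ((2 ^ (e - 1) : ℕ) : ZMod n) = 0 := by push_cast; exact h4'
      rw [ZMod.natCast_eq_zero_iff] at h6
      rw [hn] at h6
      have h7 := (Nat.pow_dvd_pow_iff_le_right (by norm_num)).mp h6
      omega
    have hdvd := orderOf_dvd_of_pow_eq_one h8
    have hne : ¬ orderOf φ ∣ 4 := fun hh => h4 (orderOf_dvd_iff_pow_eq_one.mp hh)
    have hle : orderOf φ ≤ 8 := Nat.le_of_dvd (by norm_num) hdvd
    interval_cases h : orderOf φ <;> first
      | rfl
      | (exfalso; revert hdvd hne; norm_num)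
  · -- not smooth
    refine ⟨1, ?_⟩
    intro hcon
    set φ : Equiv.Perm (ZMod n) := Equiv.ofBijective f hbij with hφ
    have h8n : ((8 : ℕ) : ℤ) ∣ (n : ℤ) := by
      refine ⟨(2 : ℤ) ^ (e - 3), ?_⟩
      rw [hn]
      push_cast
      rw [show (8:ℤ) = 2^3 by norm_num, ← pow_add]
      congr 1
      omega
    have key : ∀ (z : ZMod n) (a : ℤ), z = (a : ZMod n) → ((z.val : ℤ) ≡ a [ZMOD (8:ℕ)]) := by
      intro z a hza
      have h1 : ((z.val : ℤ) : ZMod n) = (a : ZMod n) := by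
        push_cast
        rw [ZMod.natCast_rightInverse z]
        exact hza
      have h2 : (z.val : ℤ) ≡ a [ZMOD n] := (ZMod.intCast_eq_intCast_iff _ _ _).mp h1
      exact h2.of_dvd h8n
    have hφ1 : φ (1 : ZMod n) = ((-1 : ℤ) : ZMod n) := by
      show f 1 = _
      rw [hf]
      push_cast
      ring
    have hv1 : (1 : ZMod n) = ((1 : ℤ) : ZMod n) := by push_cast; rfl
    have ha := key (φ 1) (-1) hφ1
    have hb := key (1 : ZMod n) 1 hv1
    have hA : (1 - 2 * ((φ 1).val : ℤ)) ≡ 1 - 2 * (-1) [ZMOD (8:ℕ)] :=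
      (Int.ModEq.refl 1).sub (ha.mul_left 2)
    have hB : (1 - 2 * (((1 : ZMod n)).val : ℤ)) ≡ 1 - 2 * 1 [ZMOD (8:ℕ)] :=
      (Int.ModEq.refl 1).sub (hb.mul_left 2)
    have : (1 - 2 * (-1) : ℤ) ≡ 1 - 2 * 1 [ZMOD (8:ℕ)] :=
      (hA.symm.trans hcon).trans hB
    norm_num [Int.ModEq] at this
end

section
/- Let n = 2^e·n₁ with n₁ odd. If e ≥ 5 or n₁ is not square-free, then the cyclic group ℤ_n admits a skew morphism that is not smooth. -/
theorem aux_skew (n q d : ℕ) (hn : n = q * d) (hq3 : 3 ≤ q) (hd1 : 1 ≤ d)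
    (hK : n ∣ 2 * d ^ 2) (hq4 : ¬ q ∣ 4) :
    ∃ (φ : Equiv.Perm (ZMod n)) (π : ZMod n → ℤ),
      IsAddSkewMorphism φ π ∧ ¬ IsAddSmooth φ π := by
  have hn3 : 3 ≤ n := by
    have : 3 * d ≤ q * d := Nat.mul_le_mul_right d hq3
    omega
  haveI : NeZero n := ⟨by omega⟩
  -- basic ZMod facts
  have hdd : (2 : ZMod n) * (d : ZMod n) ^ 2 = 0 := by
    have h : ((2 * d ^ 2 : ℕ) : ZMod n) = 0 := (ZMod.natCast_eq_zero_iff _ _).mpr hK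
    push_cast at h
    exact h
  have hqd : (q : ZMod n) * (d : ZMod n) = 0 := by
    have h : ((q * d : ℕ) : ZMod n) = 0 := by rw [← hn]; exact ZMod.natCast_self n
    push_cast at h
    exact h
  have L5 : ∀ x : ZMod n, (d : ZMod n) ^ 2 * (x ^ 2 + x) = 0 := by
    intro x
    obtain ⟨a, rfl⟩ := ZMod.intCast_surjective x
    obtain ⟨c, hc⟩ := Int.even_mul_succ_self a
    have hc' : a ^ 2 + a = 2 * c := by linear_combination hc
    calc (d : ZMod n) ^ 2 * ((a : ZMod n) ^ 2 + (a : ZMod n))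
        = ((a ^ 2 + a : ℤ) : ZMod n) * (d : ZMod n) ^ 2 := by push_cast; ring
      _ = ((2 * c : ℤ) : ZMod n) * (d : ZMod n) ^ 2 := by rw [hc']
      _ = (c : ZMod n) * (2 * (d : ZMod n) ^ 2) := by push_cast; ring
      _ = 0 := by rw [hdd, mul_zero]
  set f : ZMod n → ZMod n := fun x => -x + (d : ZMod n) * (x ^ 2 + x) with hf
  set g : ZMod n → ZMod n := fun x => f x + 2 * ((q : ZMod n) - 1) * (d : ZMod n) * x with hg
  have hfg : ∀ x : ZMod n, f (g x) = x := by
    intro x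
    simp only [hf, hg]
    linear_combination
      ((d : ZMod n) * ((x ^ 2 + x) + 2 * ((q : ZMod n) - 1) * x) - 2 * x + 1) * L5 x +
      (((d : ZMod n) * ((x ^ 2 + x) + 2 * ((q : ZMod n) - 1) * x) - 2 * x + 1) *
        ((q : ZMod n) - 1) * x) * hdd +
      (-2 * x) * hqd
  have hb : Function.Bijective f :=
    Finite.surjective_iff_bijective.mp (fun x => ⟨g x, hfg x⟩)
  set φ : Equiv.Perm (ZMod n) := Equiv.ofBijective f hb with hφdef
  have hφ : ∀ x, φ x = f x := fun x => rfl
  have hff : ∀ x : ZMod n, f (f x) = x - 2 * (d : ZMod n) * x := by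
    intro x
    simp only [hf]
    linear_combination ((d : ZMod n) * (x ^ 2 + x) - 2 * x + 1) * L5 x
  have heven : ∀ (j : ℕ) (x : ZMod n), (φ ^ (2 * j)) x = x - 2 * (j : ZMod n) * (d : ZMod n) * x := by
    intro j
    induction j with
    | zero => intro x; simp
    | succ j ih =>
      intro x
      have h2 : 2 * (j + 1) = 2 * j + 2 := by ring
      rw [h2, pow_add, Equiv.Perm.mul_apply]
      have hsq : (φ ^ 2) x = x - 2 * (d : ZMod n) * x := by
        rw [pow_two, Equiv.Perm.mul_apply, hφ, hφ]; exact hff x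
      rw [hsq, ih]
      push_cast
      linear_combination ((2 : ZMod n) * (j : ZMod n) * x) * hdd
  have hoddp : ∀ (j : ℕ) (x : ZMod n),
      (φ ^ (2 * j + 1)) x = f x + 2 * (j : ZMod n) * (d : ZMod n) * x := by
    intro j x
    rw [pow_succ, Equiv.Perm.mul_apply, hφ, heven j (f x)]
    simp only [hf]
    linear_combination (-(2 : ZMod n) * (j : ZMod n)) * L5 x
  set π : ZMod n → ℤ := fun x => 2 * (x.val : ℤ) + 1 with hπ
  have hzpow : ∀ x y : ZMod n, (φ ^ π x) y = f y + 2 * ((x.val : ℕ) : ZMod n) * (d : ZMod n) * y := by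
    intro x y
    have hcast : π x = ((2 * x.val + 1 : ℕ) : ℤ) := by simp only [hπ]; push_cast; ring
    rw [hcast, zpow_natCast]
    exact hoddp x.val y
  refine ⟨φ, π, ⟨?_, ?_⟩, ?_⟩
  · show f 0 = 0
    simp [hf]
  · intro x y
    rw [hzpow x y]
    simp only [hφ]
    have hx : ((x.val : ℕ) : ZMod n) = x := ZMod.natCast_rightInverse x
    rw [hx]
    simp only [hf]
    ring
  · intro hsm
    have h3d : 3 * d ≤ q * d := Nat.mul_le_mul_right d hq3
    have hval1 : (1 : ZMod n).val = 1 := by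
      have : ((1 : ℕ) : ZMod n).val = 1 := ZMod.val_cast_of_lt (by omega)
      simpa using this
    have hφ1 : φ 1 = ((2 * d - 1 : ℕ) : ZMod n) := by
      rw [hφ]
      have hc : ((2 * d - 1 : ℕ) : ZMod n) = 2 * (d : ZMod n) - 1 := by
        have h1 : (1 : ℕ) ≤ 2 * d := by omega
        push_cast [Nat.cast_sub h1]
        ring
      rw [hc]
      simp only [hf]
      ring
    have hvalφ1 : (φ 1).val = 2 * d - 1 := by
      rw [hφ1]
      exact ZMod.val_cast_of_lt (by omega)
    have h1 := hsm 1
    rw [hπ] at h1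
    simp only [hvalφ1, hval1] at h1
    obtain ⟨w, hw⟩ : ∃ w, d = w + 1 := ⟨d - 1, by omega⟩
    have hdvd : ((orderOf φ : ℕ) : ℤ) ∣ ((4 * w : ℕ) : ℤ) := by
      have hd2 := h1.dvd
      have he : ((4 * w : ℕ) : ℤ) = -((2 * (1:ℤ) + 1) - (2 * ((2 * d - 1 : ℕ) : ℤ) + 1)) := by
        push_cast [Nat.cast_sub (by omega : (1:ℕ) ≤ 2 * d)]
        omega
      rw [he]
      exact (hd2.neg_right)
    have hdvd' : orderOf φ ∣ 4 * w := Int.natCast_dvd_natCast.mp hdvd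
    have h42 : 4 * w = 2 * (2 * w) := by ring
    have hpow : φ ^ (2 * (2 * w)) = 1 := by
      rw [← h42]; exact orderOf_dvd_iff_pow_eq_one.mp hdvd'
    have heval := heven (2 * w) 1
    rw [hpow] at heval
    simp only [Equiv.Perm.one_apply] at heval
    push_cast at heval
    have hzero : ((2 * (2 * w) * d : ℕ) : ZMod n) = 0 := by
      push_cast
      linear_combination heval
    have hzdvd : n ∣ 2 * (2 * w) * d := (ZMod.natCast_eq_zero_iff _ _).mp hzero
    have h4dd : n ∣ 4 * d * d := by
      obtain ⟨k, hk⟩ := hK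
      exact ⟨2 * k, by rw [show 4 * d * d = 2 * (2 * d ^ 2) by ring, hk]; ring⟩
    have h4d : n ∣ 4 * d := by
      have hsub : 4 * d * d - 2 * (2 * w) * d = 4 * d := by
        have h1 : 4 * d * d = 2 * (2 * w) * d + 4 * d := by rw [hw]; ring
        omega
      calc n ∣ 4 * d * d - 2 * (2 * w) * d := Nat.dvd_sub h4dd hzdvd
        _ = 4 * d := hsub
    have hq4' : q ∣ 4 := by
      rw [hn] at h4d
      exact (Nat.mul_dvd_mul_iff_right (by omega : 0 < d)).mp h4d
    exact hq4 hq4'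

theorem stmt9 (n e n₁ : ℕ) (hn : n = 2 ^ e * n₁) (hodd : Odd n₁)
    (h : 5 ≤ e ∨ ¬ Squarefree n₁) :
    ∃ (φ : Equiv.Perm (ZMod n)) (π : ZMod n → ℤ),
      IsAddSkewMorphism φ π ∧ ¬ IsAddSmooth φ π := by
  have hn₁ : n₁ ≠ 0 := by
    rintro rfl
    exact (Nat.not_odd_zero) hodd
  rcases h with he | hsf
  · -- even case: 32 ∣ n
    have h32 : 32 ∣ n := by
      rw [hn]
      exact Dvd.dvd.mul_right (by calc (32:ℕ) = 2 ^ 5 := by norm_num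
                                    _ ∣ 2 ^ e := pow_dvd_pow 2 he) n₁
    obtain ⟨m, hm⟩ := h32
    have hm1 : 1 ≤ m := by
      rcases Nat.eq_zero_or_pos m with h0 | h1
      · exfalso; rw [h0, mul_zero] at hm
        exact (by positivity : 0 < 2 ^ e * n₁).ne' (hn ▸ hm)
      · exact h1
    exact aux_skew n 8 (4 * m) (by omega) (by norm_num) (by omega)
      ⟨m, by rw [hm]; ring⟩ (by decide)
  · -- odd case: p * p ∣ n₁ for some odd prime p
    have hex : ∃ p, p.Prime ∧ p * p ∣ n₁ := by
      by_contra hcon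
      push_neg at hcon
      exact hsf (Nat.squarefree_iff_prime_squarefree.mpr fun p hp => hcon p hp)
    obtain ⟨p, hp, hpp⟩ := hex
    have hp2 : p ≠ 2 := by
      rintro rfl
      obtain ⟨t, ht⟩ := hpp
      obtain ⟨s, hs⟩ := hodd
      omega
    have hp3 : 3 ≤ p := by
      have := hp.two_le
      omega
    obtain ⟨k, hk⟩ := hpp
    have hk1 : 1 ≤ k := by
      rcases Nat.eq_zero_or_pos k with h0 | h1
      · exfalso; rw [h0, mul_zero] at hk; exact hn₁ hk
      · exact h1
    refine aux_skew n p (2 ^ e * p * k) (by rw [hn, hk]; ring) hp3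
      (Nat.succ_le_of_lt (by positivity)) ⟨2 ^ (e + 1) * k, by rw [hn, hk]; ring⟩ ?_
    intro hdvd
    have hle : p ≤ 4 := Nat.le_of_dvd (by norm_num) hdvd
    interval_cases p
    · omega
    · exact absurd hp (by decide)
end

section
/- Let G ≤ Sym(Ω) be a finite permutation group containing a regular abelian subgroup A, and let N be a normal subgroup of G. Then there exists a subgroup B ≤ A such that the orbits of N on Ω coincide with the orbits of B on Ω. -/
theorem stmt11 {Ω : Type*} [Fintype Ω] (G A N : Subgroup (Equiv.Perm Ω))
    (hAG : A ≤ G) (hNG : N ≤ G)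
    (hAcomm : ∀ a b : A, a * b = b * a)
    (hreg : ∀ x y : Ω, ∃! a : A, (a : Equiv.Perm Ω) x = y)
    (hnorm : ∀ g ∈ G, ∀ n ∈ N, g * n * g⁻¹ ∈ N) :
    ∃ B : Subgroup (Equiv.Perm Ω), B ≤ A ∧
      ∀ x y : Ω, (∃ n ∈ N, n x = y) ↔ ∃ b ∈ B, b x = y := by
  refine ⟨{ carrier := {p | p ∈ A ∧ ∀ z : Ω, ∃ n ∈ N, (n : Equiv.Perm Ω) z = p z}
            one_mem' := ⟨A.one_mem, fun z => ⟨1, N.one_mem, rfl⟩⟩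
            mul_mem' := ?_
            inv_mem' := ?_ }, ?_, ?_⟩
  · rintro p q ⟨hpA, hp⟩ ⟨hqA, hq⟩
    refine ⟨A.mul_mem hpA hqA, fun z => ?_⟩
    obtain ⟨n2, hn2, hn2z⟩ := hq z
    obtain ⟨n1, hn1, hn1z⟩ := hp (q z)
    exact ⟨n1 * n2, N.mul_mem hn1 hn2, by simp [Equiv.Perm.mul_apply, hn2z, hn1z]⟩
  · rintro p ⟨hpA, hp⟩
    refine ⟨A.inv_mem hpA, fun z => ?_⟩
    obtain ⟨n, hn, hnz⟩ := hp (p⁻¹ z)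
    refine ⟨n⁻¹, N.inv_mem hn, ?_⟩
    have h1 : n (p⁻¹ z) = z := by simpa using hnz
    calc ((n : Equiv.Perm Ω)⁻¹) z = (n : Equiv.Perm Ω)⁻¹ ((n : Equiv.Perm Ω) (p⁻¹ z)) := by rw [h1]
      _ = p⁻¹ z := by simp
  · exact fun p hp => hp.1
  · intro x y
    constructor
    · rintro ⟨n, hn, hnx⟩
      obtain ⟨a, hax, -⟩ := hreg x y
      refine ⟨(a : Equiv.Perm Ω), ⟨a.2, fun z => ?_⟩, hax⟩
      obtain ⟨c, hcx, -⟩ := hreg x z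
      refine ⟨(c : Equiv.Perm Ω) * n * (c : Equiv.Perm Ω)⁻¹,
        hnorm _ (hAG c.2) _ hn, ?_⟩
      have hcomm : (a : Equiv.Perm Ω) * c = (c : Equiv.Perm Ω) * a := by
        exact_mod_cast hAcomm a c
      calc ((c : Equiv.Perm Ω) * n * (c : Equiv.Perm Ω)⁻¹) z
          = (c : Equiv.Perm Ω) (n x) := by rw [← hcx]; simp [Equiv.Perm.mul_apply]
        _ = (c : Equiv.Perm Ω) ((a : Equiv.Perm Ω) x) := by rw [hnx, hax]
        _ = (a : Equiv.Perm Ω) z := by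
            rw [← hcx]
            have h2 := congrArg (fun p : Equiv.Perm Ω => p x) hcomm
            simpa [Equiv.Perm.mul_apply] using h2.symm
    · rintro ⟨b, ⟨hbA, hb⟩, hbx⟩
      obtain ⟨n, hn, hnz⟩ := hb x
      exact ⟨n, hn, by rw [hnz, hbx]⟩
end

section
/- Let N ≅ ℤ_p × ℤ_p for a prime p and let K ≤ Aut(N) with |K| coprime to p. If N contains a K-invariant subgroup of order p, then K is isomorphic to a subgroup of ℤ_{p−1} × ℤ_{p−1}. -/
section aux

/-- Restriction of an additive automorphism to an invariant subgroup. -/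
def resAut {V : Type*} [AddCommGroup V] (H : AddSubgroup V) (σ : AddAut V)
    (h1 : ∀ x ∈ H, σ x ∈ H) (h2 : ∀ x ∈ H, (-σ) x ∈ H) : AddAut H where
  toFun x := ⟨σ x, h1 x x.2⟩
  invFun x := ⟨(-σ) x, h2 x x.2⟩
  left_inv x := by ext : 1; simp
  right_inv x := by ext : 1; simp
  map_add' x y := by ext : 1; simp

end aux

theorem stmt12 (p : ℕ) (hp : p.Prime)
    (K : Subgroup (Multiplicative (AddAut (ZMod p × ZMod p))))
    (hcop : Nat.Coprime (Nat.card K) p)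
    (hinv : ∃ H : AddSubgroup (ZMod p × ZMod p), Nat.card H = p ∧
      ∀ σ ∈ K, ∀ h ∈ H, (Multiplicative.toAdd σ) h ∈ H) :
    ∃ f : K →* Multiplicative (ZMod (p - 1) × ZMod (p - 1)),
      Function.Injective f := by
  classical
  have : Fact p.Prime := ⟨hp⟩
  obtain ⟨H, hcard, hK⟩ := hinv
  set V := ZMod p × ZMod p
  have hKinv : ∀ σ ∈ K, ∀ h ∈ H, (-(Multiplicative.toAdd σ)) h ∈ H := by
    intro σ hσ h hh
    exact hK σ⁻¹ (inv_mem hσ) h hh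
  have hmap : ∀ σ : K, H.map ((Multiplicative.toAdd (σ : Multiplicative (AddAut V)) : AddAut V) : V ≃+ V) = H := by
    intro σ
    apply le_antisymm
    · rintro x ⟨y, hy, rfl⟩
      exact hK σ σ.2 y hy
    · intro x hx
      exact ⟨(-(Multiplicative.toAdd (σ : Multiplicative (AddAut V)))) x, hKinv σ σ.2 x hx, by simp⟩
  -- the restriction homomorphism
  let f₁ : K →* Multiplicative (AddAut H) :=
    { toFun := fun σ => Multiplicative.ofAdd (resAut H (Multiplicative.toAdd (σ : Multiplicative (AddAut V))) (hK σ σ.2) (hKinv σ σ.2))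
      map_one' := rfl
      map_mul' := fun σ τ => rfl }
  -- the quotient homomorphism
  let f₂ : K →* Multiplicative (AddAut (V ⧸ H)) :=
    { toFun := fun σ => Multiplicative.ofAdd (QuotientAddGroup.congr H H ((Multiplicative.toAdd (σ : Multiplicative (AddAut V)) : AddAut V) : V ≃+ V) (hmap σ))
      map_one' := by
        refine Multiplicative.toAdd.injective (DFunLike.ext _ _ fun x => ?_)
        induction x using QuotientAddGroup.induction_on with
        | H x => rfl
      map_mul' := fun σ τ => by
        refine Multiplicative.toAdd.injective (DFunLike.ext _ _ fun x => ?_)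
        induction x using QuotientAddGroup.induction_on with
        | H x => rfl }
  -- p • anything is 0 in V
  have hord : ∀ y : V, p • y = 0 := by
    intro y
    rw [← Nat.cast_smul_eq_nsmul (ZMod p), ZMod.natCast_self, zero_smul]
  -- injectivity of the combined map
  have hinj : Function.Injective (f₁.prod f₂) := by
    rw [injective_iff_map_eq_one]
    intro σ hσ
    have h1 : f₁ σ = 1 := congrArg Prod.fst hσ
    have h2 : f₂ σ = 1 := congrArg Prod.snd hσ
    -- σ fixes H pointwise
    have hfix : ∀ x ∈ H, (Multiplicative.toAdd (σ : Multiplicative (AddAut V))) x = x := by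
      intro x hx
      have : (Multiplicative.toAdd (f₁ σ)) ⟨x, hx⟩ = (Multiplicative.toAdd (1 : Multiplicative (AddAut H))) ⟨x, hx⟩ := by rw [h1]
      have := congrArg Subtype.val this
      simpa [f₁, resAut] using this
    -- σ x - x ∈ H for all x
    have hdiff : ∀ x : V, (Multiplicative.toAdd (σ : Multiplicative (AddAut V))) x - x ∈ H := by
      intro x
      have h2x : (Multiplicative.toAdd (f₂ σ)) ((x : V ⧸ H)) = (Multiplicative.toAdd (1 : Multiplicative (AddAut (V ⧸ H)))) ((x : V ⧸ H)) := by rw [h2]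
      have : ((((Multiplicative.toAdd (σ : Multiplicative (AddAut V))) x) : V) : V ⧸ H) = ((x : V) : V ⧸ H) := h2x
      exact QuotientAddGroup.eq_iff_sub_mem.mp this
    -- iterate: σ^n x = x + n • (σ x - x)
    have hiter : ∀ (n : ℕ) (x : V), (n • Multiplicative.toAdd (σ : Multiplicative (AddAut V))) x = x + n • ((Multiplicative.toAdd (σ : Multiplicative (AddAut V))) x - x) := by
      intro n
      induction n with
      | zero => intro x; simp
      | succ n ih =>
        intro x
        have e1 : ((n + 1) • Multiplicative.toAdd (σ : Multiplicative (AddAut V))) x = (Multiplicative.toAdd (σ : Multiplicative (AddAut V))) ((n • Multiplicative.toAdd (σ : Multiplicative (AddAut V))) x) := by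
          rw [succ_nsmul']; rfl
        rw [e1, ih x, map_add, hfix _ (AddSubgroup.nsmul_mem H (hdiff x) n), succ_nsmul]
        abel
    -- hence σ ^ p = 1
    have hco : p • Multiplicative.toAdd (σ : Multiplicative (AddAut V)) = 0 := by
      refine DFunLike.ext _ _ fun x => ?_
      rw [hiter p x, hord]
      simp
    have hpow : σ ^ p = 1 := Subtype.ext (by rw [SubmonoidClass.coe_pow]; show Multiplicative.ofAdd (p • Multiplicative.toAdd (σ : Multiplicative (AddAut V))) = Multiplicative.ofAdd 0; rw [hco])
    have h1' : orderOf σ ∣ p := orderOf_dvd_of_pow_eq_one hpow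
    have h2' : orderOf σ ∣ Nat.card K := orderOf_dvd_natCard σ
    have hdvd : orderOf σ ∣ Nat.gcd (Nat.card K) p := Nat.dvd_gcd h2' h1'
    rw [hcop] at hdvd
    exact orderOf_eq_one_iff.mp (Nat.dvd_one.mp hdvd)
  -- cardinalities
  have hcardQ : Nat.card (V ⧸ H) = p := by
    have h1 : Nat.card V = Nat.card (V ⧸ H) * Nat.card H :=
      AddSubgroup.card_eq_card_quotient_mul_card_addSubgroup H
    have h2 : Nat.card V = p * p := by
      simp [V, Nat.card_prod, Nat.card_zmod]
    rw [h2, hcard] at h1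
    exact Nat.eq_of_mul_eq_mul_right hp.pos h1.symm
  have hmcard : Nat.card (Multiplicative (ZMod (p - 1))) = p - 1 := by
    exact (Nat.card_congr Multiplicative.toAdd).trans (Nat.card_zmod _)
  -- build equivalences to Multiplicative (ZMod (p-1))
  have e₁ : Multiplicative (AddAut H) ≃* Multiplicative (ZMod (p - 1)) := by
    have eH : H ≃+ ZMod p := addEquivOfPrimeCardEq hcard (by simp [Nat.card_zmod])
    refine (AddEquiv.toMultiplicativeLeft ((AddAut.congr eH).trans (ZMod.AddAutEquivUnits p))).trans ?_
    refine mulEquivOfCyclicCardEq ?_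
    rw [Nat.card_eq_fintype_card, ZMod.card_units_eq_totient, Nat.totient_prime hp, hmcard]
  have e₂ : Multiplicative (AddAut (V ⧸ H)) ≃* Multiplicative (ZMod (p - 1)) := by
    have eQ : (V ⧸ H) ≃+ ZMod p := addEquivOfPrimeCardEq hcardQ (by simp [Nat.card_zmod])
    refine (AddEquiv.toMultiplicativeLeft ((AddAut.congr eQ).trans (ZMod.AddAutEquivUnits p))).trans ?_
    refine mulEquivOfCyclicCardEq ?_
    rw [Nat.card_eq_fintype_card, ZMod.card_units_eq_totient, Nat.totient_prime hp, hmcard]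
  let e : Multiplicative (AddAut H) × Multiplicative (AddAut (V ⧸ H)) ≃* Multiplicative (ZMod (p - 1) × ZMod (p - 1)) :=
    (MulEquiv.prodCongr e₁ e₂).trans
      (MulEquiv.prodMultiplicative (G := ZMod (p - 1)) (H := ZMod (p - 1))).symm
  exact ⟨e.toMonoidHom.comp (f₁.prod f₂), e.injective.comp hinj⟩
end

section
/- Let G ≤ Sym(Ω) with G = AY where A is abelian and regular on Ω and Y = G_x is the stabilizer of a point x. If O_p(G) ≤ A for every prime divisor p of |G|, then A is normal in G, and in fact A = F(G), the Fitting subgroup of G. -/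
open scoped commutatorElement

private lemma cconj {G : Type*} [Group G] {c a : G} (h : Commute c a) :
    c * a * c⁻¹ = a := by rw [h.eq, mul_inv_cancel_right]

private lemma cconj' {G : Type*} [Group G] {c a : G} (h : Commute c a) :
    c⁻¹ * a * c = a := by rw [mul_assoc, ← h.eq, inv_mul_cancel_left]

private lemma ito_step1 {G : Type*} [Group G] {a b c a₁ b₁ : G}
    (hca : Commute c a) (ha₁a : Commute a₁ a) (h₁ : c * b * c⁻¹ = a₁ * b₁) :
    c * (a⁻¹ * b⁻¹ * a * b) * c⁻¹ = a⁻¹ * b₁⁻¹ * a * b₁ :=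
  calc c * (a⁻¹ * b⁻¹ * a * b) * c⁻¹
      = (c * a * c⁻¹)⁻¹ * (c * b * c⁻¹)⁻¹ * (c * a * c⁻¹) * (c * b * c⁻¹) := by group
    _ = a⁻¹ * (a₁ * b₁)⁻¹ * a * (a₁ * b₁) := by rw [cconj hca, h₁]
    _ = a⁻¹ * b₁⁻¹ * (a₁⁻¹ * a * a₁) * b₁ := by group
    _ = a⁻¹ * b₁⁻¹ * a * b₁ := by rw [cconj' ha₁a]

private lemma ito_step2 {G : Type*} [Group G] {a b₁ d b₂ a₂ : G}
    (hdb₁ : Commute d b₁) (hb₂b₁ : Commute b₂ b₁) (h₂ : d * a * d⁻¹ = b₂ * a₂) :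
    d * (a⁻¹ * b₁⁻¹ * a * b₁) * d⁻¹ = a₂⁻¹ * b₁⁻¹ * a₂ * b₁ :=
  calc d * (a⁻¹ * b₁⁻¹ * a * b₁) * d⁻¹
      = (d * a * d⁻¹)⁻¹ * (d * b₁ * d⁻¹)⁻¹ * (d * a * d⁻¹) * (d * b₁ * d⁻¹) := by group
    _ = (b₂ * a₂)⁻¹ * b₁⁻¹ * (b₂ * a₂) * b₁ := by rw [cconj hdb₁, h₂]
    _ = a₂⁻¹ * (b₂⁻¹ * b₁⁻¹ * b₂) * a₂ * b₁ := by group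
    _ = a₂⁻¹ * b₁⁻¹ * a₂ * b₁ := by rw [cconj' hb₂b₁.inv_right]

private lemma ito_step3 {G : Type*} [Group G] {a₂ b₁ c b a₁ : G}
    (hca₂ : Commute c a₂) (hca₁ : Commute c a₁) (ha₁a₂ : Commute a₁ a₂)
    (h₁ : c * b * c⁻¹ = a₁ * b₁) :
    c⁻¹ * (a₂⁻¹ * b₁⁻¹ * a₂ * b₁) * c = a₂⁻¹ * b⁻¹ * a₂ * b := by
  have hb₁ : c⁻¹ * b₁ * c = a₁⁻¹ * b := by
    have hb : b₁ = a₁⁻¹ * (c * b * c⁻¹) := by rw [h₁]; group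
    rw [hb]
    calc c⁻¹ * (a₁⁻¹ * (c * b * c⁻¹)) * c = (c⁻¹ * a₁⁻¹ * c) * b := by group
      _ = a₁⁻¹ * b := by rw [cconj' hca₁.inv_right]
  calc c⁻¹ * (a₂⁻¹ * b₁⁻¹ * a₂ * b₁) * c
      = (c⁻¹ * a₂ * c)⁻¹ * (c⁻¹ * b₁ * c)⁻¹ * (c⁻¹ * a₂ * c) * (c⁻¹ * b₁ * c) := by group
    _ = a₂⁻¹ * (a₁⁻¹ * b)⁻¹ * a₂ * (a₁⁻¹ * b) := by rw [cconj' hca₂, hb₁]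
    _ = a₂⁻¹ * b⁻¹ * (a₁ * a₂ * a₁⁻¹) * b := by group
    _ = a₂⁻¹ * b⁻¹ * a₂ * b := by rw [cconj ha₁a₂]

private lemma ito_step4 {G : Type*} [Group G] {a₂ b d b₂ a : G}
    (hdb : Commute d b) (hdb₂ : Commute d b₂) (hb₂b : Commute b₂ b)
    (h₂ : d * a * d⁻¹ = b₂ * a₂) :
    d⁻¹ * (a₂⁻¹ * b⁻¹ * a₂ * b) * d = a⁻¹ * b⁻¹ * a * b := by
  have ha₂ : d⁻¹ * a₂ * d = b₂⁻¹ * a := by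
    have ha : a₂ = b₂⁻¹ * (d * a * d⁻¹) := by rw [h₂]; group
    rw [ha]
    calc d⁻¹ * (b₂⁻¹ * (d * a * d⁻¹)) * d = (d⁻¹ * b₂⁻¹ * d) * a := by group
      _ = b₂⁻¹ * a := by rw [cconj' hdb₂.inv_right]
  calc d⁻¹ * (a₂⁻¹ * b⁻¹ * a₂ * b) * d
      = (d⁻¹ * a₂ * d)⁻¹ * (d⁻¹ * b * d)⁻¹ * (d⁻¹ * a₂ * d) * (d⁻¹ * b * d) := by group
    _ = (b₂⁻¹ * a)⁻¹ * b⁻¹ * (b₂⁻¹ * a) * b := by rw [cconj' hdb, ha₂]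
    _ = a⁻¹ * (b₂ * b⁻¹ * b₂⁻¹) * a * b := by group
    _ = a⁻¹ * b⁻¹ * a * b := by rw [cconj hb₂b.inv_right]

private lemma ito_commute {G : Type*} [Group G] {a b c d a₁ b₁ b₂ a₂ : G}
    (hca : Commute c a) (ha₁a : Commute a₁ a) (hca₂ : Commute c a₂) (hca₁ : Commute c a₁)
    (ha₁a₂ : Commute a₁ a₂)
    (hdb : Commute d b) (hdb₁ : Commute d b₁) (hdb₂ : Commute d b₂)
    (hb₂b₁ : Commute b₂ b₁) (hb₂b : Commute b₂ b)
    (h₁ : c * b * c⁻¹ = a₁ * b₁) (h₂ : d * a * d⁻¹ = b₂ * a₂) :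
    (a⁻¹ * b⁻¹ * a * b) * (c⁻¹ * d⁻¹ * c * d) = (c⁻¹ * d⁻¹ * c * d) * (a⁻¹ * b⁻¹ * a * b) := by
  have key : (c⁻¹ * d⁻¹ * c * d)⁻¹ * (a⁻¹ * b⁻¹ * a * b) * (c⁻¹ * d⁻¹ * c * d)
      = a⁻¹ * b⁻¹ * a * b := by
    calc (c⁻¹ * d⁻¹ * c * d)⁻¹ * (a⁻¹ * b⁻¹ * a * b) * (c⁻¹ * d⁻¹ * c * d)
        = d⁻¹ * (c⁻¹ * (d * (c * (a⁻¹ * b⁻¹ * a * b) * c⁻¹) * d⁻¹) * c) * d := by group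
      _ = d⁻¹ * (c⁻¹ * (d * (a⁻¹ * b₁⁻¹ * a * b₁) * d⁻¹) * c) * d := by
            rw [ito_step1 hca ha₁a h₁]
      _ = d⁻¹ * (c⁻¹ * (a₂⁻¹ * b₁⁻¹ * a₂ * b₁) * c) * d := by
            rw [ito_step2 hdb₁ hb₂b₁ h₂]
      _ = d⁻¹ * (a₂⁻¹ * b⁻¹ * a₂ * b) * d := by rw [ito_step3 hca₂ hca₁ ha₁a₂ h₁]
      _ = a⁻¹ * b⁻¹ * a * b := by rw [ito_step4 hdb hdb₂ hb₂b h₂]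
  calc (a⁻¹ * b⁻¹ * a * b) * (c⁻¹ * d⁻¹ * c * d)
      = (c⁻¹ * d⁻¹ * c * d) * ((c⁻¹ * d⁻¹ * c * d)⁻¹ * (a⁻¹ * b⁻¹ * a * b)
          * (c⁻¹ * d⁻¹ * c * d)) := by group
    _ = (c⁻¹ * d⁻¹ * c * d) * (a⁻¹ * b⁻¹ * a * b) := by rw [key]

private lemma nilpotent_of_commutator_mem_center {N : Type*} [Group N]
    (h : ∀ x y : N, ⁅x, y⁆ ∈ Subgroup.center N) : Group.IsNilpotent N := by
  letI : CommGroup (N ⧸ Subgroup.center N) :=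
    { (inferInstance : Group (N ⧸ Subgroup.center N)) with
      mul_comm := by
        intro p q
        induction p using QuotientGroup.induction_on with | _ u =>
        induction q using QuotientGroup.induction_on with | _ v =>
        rw [← QuotientGroup.mk_mul, ← QuotientGroup.mk_mul]
        rw [QuotientGroup.eq]
        have e : (u * v)⁻¹ * (v * u) = ⁅v⁻¹, u⁻¹⁆ := by
          rw [commutatorElement_def]; group
        rw [e]
        exact h _ _ }
  exact of_quotient_center_nilpotent inferInstance

theorem stmt16 {G Ω : Type*} [Group G] [Fintype G] [Fintype Ω] [MulAction G Ω]
    (hfaith : ∀ g : G, (∀ ω : Ω, g • ω = ω) → g = 1)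
    (A : Subgroup G) (hAcomm : ∀ a b : A, a * b = b * a)
    (hreg : ∀ ω₁ ω₂ : Ω, ∃! a : A, (a : G) • ω₁ = ω₂)
    (x : Ω) (hY : IsCyclic (MulAction.stabilizer G x))
    (hfact : ∀ g : G, ∃ a ∈ A, ∃ y ∈ MulAction.stabilizer G x, g = a * y)
    (hOp : ∀ p : ℕ, p.Prime → p ∣ Fintype.card G →
      ∀ P : Subgroup G, P.Normal → IsPGroup p P → P ≤ A) :
    A.Normal ∧ Group.IsNilpotent A ∧
      ∀ H : Subgroup G, H.Normal → Group.IsNilpotent H → H ≤ A := by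
  classical
  set Y := MulAction.stabilizer G x with hYdef
  have hAc : ∀ u v : G, u ∈ A → v ∈ A → Commute u v := by
    intro u v hu hv
    have h := hAcomm ⟨u, hu⟩ ⟨v, hv⟩
    exact congrArg Subtype.val h
  have hYc : ∀ u v : G, u ∈ Y → v ∈ Y → Commute u v := by
    intro u v hu hv
    obtain ⟨g, hg⟩ := hY
    obtain ⟨m, hm⟩ := hg ⟨u, hu⟩
    obtain ⟨n, hn⟩ := hg ⟨v, hv⟩
    have h : Commute (⟨u, hu⟩ : Y) ⟨v, hv⟩ := by
      rw [← hm, ← hn]; exact (Commute.refl g).zpow_zpow m n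
    exact congrArg Subtype.val h
  have hYA : ∀ g : G, ∃ y ∈ Y, ∃ a ∈ A, g = y * a := by
    intro g
    obtain ⟨a, ha, y, hy, h⟩ := hfact g⁻¹
    exact ⟨y⁻¹, inv_mem hy, a⁻¹, inv_mem ha, by rw [← inv_inv g, h, mul_inv_rev]⟩
  set S : Set G := {s | ∃ a ∈ A, ∃ y ∈ Y, s = a⁻¹ * y⁻¹ * a * y} with hSdef
  set K : Subgroup G := Subgroup.closure S with hKdef
  have hSK : S ⊆ K := Subgroup.subset_closure
  have hScomm : ∀ s ∈ S, ∀ t ∈ S, Commute s t := by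
    rintro s ⟨a, ha, b, hb, rfl⟩ t ⟨c, hc, d, hd, rfl⟩
    obtain ⟨a₁, ha₁, b₁, hb₁, h₁⟩ := hfact (c * b * c⁻¹)
    obtain ⟨b₂, hb₂, a₂, ha₂, h₂⟩ := hYA (d * a * d⁻¹)
    exact ito_commute (hAc c a hc ha) (hAc a₁ a ha₁ ha) (hAc c a₂ hc ha₂)
      (hAc c a₁ hc ha₁) (hAc a₁ a₂ ha₁ ha₂) (hYc d b hd hb) (hYc d b₁ hd hb₁)
      (hYc d b₂ hd hb₂) (hYc b₂ b₁ hb₂ hb₁) (hYc b₂ b hb₂ hb) h₁ h₂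
  have hSconj : ∀ g s, s ∈ S → g * s * g⁻¹ ∈ S := by
    have hACl : ∀ c ∈ A, ∀ s ∈ S, c * s * c⁻¹ ∈ S := by
      rintro c hc s ⟨a, ha, b, hb, rfl⟩
      obtain ⟨a₁, ha₁, b₁, hb₁, h₁⟩ := hfact (c * b * c⁻¹)
      exact ⟨a, ha, b₁, hb₁, ito_step1 (hAc c a hc ha) (hAc a₁ a ha₁ ha) h₁⟩
    have hYCl : ∀ d ∈ Y, ∀ s ∈ S, d * s * d⁻¹ ∈ S := by
      rintro d hd s ⟨a, ha, b, hb, rfl⟩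
      obtain ⟨b₂, hb₂, a₂, ha₂, h₂⟩ := hYA (d * a * d⁻¹)
      exact ⟨a₂, ha₂, b, hb, ito_step2 (hYc d b hd hb) (hYc b₂ b hb₂ hb) h₂⟩
    intro g s hs
    obtain ⟨a, ha, y, hy, rfl⟩ := hfact g
    have h1 : y * s * y⁻¹ ∈ S := hYCl y hy s hs
    have h2 : a * (y * s * y⁻¹) * a⁻¹ ∈ S := hACl a ha _ h1
    have e : (a * y) * s * (a * y)⁻¹ = a * (y * s * y⁻¹) * a⁻¹ := by group
    rw [e]; exact h2
  have hKnormal : K.Normal := by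
    constructor
    intro n hn g
    refine Subgroup.closure_induction (p := fun y _ => g * y * g⁻¹ ∈ K) ?_ ?_ ?_ ?_ hn
    · intro s hs; exact hSK (hSconj g s hs)
    · simpa using K.one_mem
    · intro u v hu hv hgu hgv
      have e : g * (u * v) * g⁻¹ = (g * u * g⁻¹) * (g * v * g⁻¹) := by group
      rw [e]; exact K.mul_mem hgu hgv
    · intro u hu hgu
      have e : g * u⁻¹ * g⁻¹ = (g * u * g⁻¹)⁻¹ := by group
      rw [e]; exact K.inv_mem hgu
  have hKcomm : ∀ u ∈ K, ∀ v ∈ K, Commute u v := by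
    have h1 : ∀ s ∈ S, ∀ v ∈ K, Commute s v := by
      intro s hs v hv
      refine Subgroup.closure_induction (p := fun y _ => Commute s y) ?_ ?_ ?_ ?_ hv
      · exact fun t ht => hScomm s hs t ht
      · exact Commute.one_right s
      · exact fun u w _ _ h h' => h.mul_right h'
      · exact fun u _ h => h.inv_right
    intro u hu v hv
    refine Subgroup.closure_induction (p := fun y _ => Commute y v) ?_ ?_ ?_ ?_ hu
    · exact fun s hs => h1 s hs v hv
    · exact Commute.one_left v
    · exact fun a b _ _ h h' => h.mul_left h'
    · exact fun a _ h => h.inv_left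
  have hGK : ∀ g h : G, ⁅g, h⁆ ∈ K := by
    have base : ∀ u v : G, u⁻¹ * v⁻¹ * u * v ∈ K := by
      intro u v
      obtain ⟨a, ha, b, hb, rfl⟩ := hfact u
      obtain ⟨c, hc, d, hd, rfl⟩ := hfact v
      have m1 : a⁻¹ * d⁻¹ * a * d ∈ K := hSK ⟨a, ha, d, hd, rfl⟩
      have m2 : b⁻¹ * c⁻¹ * b * c ∈ K := by
        have h0 : c⁻¹ * b⁻¹ * c * b ∈ K := hSK ⟨c, hc, b, hb, rfl⟩
        have h' := K.inv_mem h0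
        have e : (c⁻¹ * b⁻¹ * c * b)⁻¹ = b⁻¹ * c⁻¹ * b * c := by group
        rwa [e] at h'
      have hoc_ac : a⁻¹ * c⁻¹ * a * c = 1 := by
        have h := (hAc c a hc ha).eq
        calc a⁻¹ * c⁻¹ * a * c = a⁻¹ * c⁻¹ * (a * c) := by group
          _ = a⁻¹ * c⁻¹ * (c * a) := by rw [← h]
          _ = 1 := by group
      have hoc_bd : b⁻¹ * d⁻¹ * b * d = 1 := by
        have h := (hYc d b hd hb).eq
        calc b⁻¹ * d⁻¹ * b * d = b⁻¹ * d⁻¹ * (b * d) := by group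
          _ = b⁻¹ * d⁻¹ * (d * b) := by rw [← h]
          _ = 1 := by group
      have hacd : a⁻¹ * (c * d)⁻¹ * a * (c * d) ∈ K := by
        have e : a⁻¹ * (c * d)⁻¹ * a * (c * d)
            = (a⁻¹ * d⁻¹ * a * d) * (d⁻¹ * (a⁻¹ * c⁻¹ * a * c) * d) := by group
        rw [e, hoc_ac, mul_one, inv_mul_cancel, mul_one]
        exact m1
      have hbcd : b⁻¹ * (c * d)⁻¹ * b * (c * d) ∈ K := by
        have k2 : d⁻¹ * (b⁻¹ * c⁻¹ * b * c) * d ∈ K := by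
          have h := hKnormal.conj_mem _ m2 d⁻¹
          rwa [inv_inv] at h
        have e : b⁻¹ * (c * d)⁻¹ * b * (c * d)
            = (b⁻¹ * d⁻¹ * b * d) * (d⁻¹ * (b⁻¹ * c⁻¹ * b * c) * d) := by group
        rw [e, hoc_bd, one_mul]
        exact k2
      have k3 : b⁻¹ * (a⁻¹ * (c * d)⁻¹ * a * (c * d)) * b ∈ K := by
        have h := hKnormal.conj_mem _ hacd b⁻¹
        rwa [inv_inv] at h
      have efin : (a * b)⁻¹ * (c * d)⁻¹ * (a * b) * (c * d)
          = (b⁻¹ * (a⁻¹ * (c * d)⁻¹ * a * (c * d)) * b) * (b⁻¹ * (c * d)⁻¹ * b * (c * d)) := by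
        group
      rw [efin]; exact K.mul_mem k3 hbcd
    intro g h
    have e : ⁅g, h⁆ = (g⁻¹)⁻¹ * (h⁻¹)⁻¹ * g⁻¹ * h⁻¹ := by rw [commutatorElement_def]; group
    rw [e]; exact base g⁻¹ h⁻¹
  -- every normal nilpotent subgroup is contained in A
  have hL : ∀ H : Subgroup G, H.Normal → Group.IsNilpotent ↥H → H ≤ A := by
    intro H hHn hHnil
    haveI := hHn
    have hp_elt : ∀ h : G, h ∈ H → ∀ p k : ℕ, p.Prime → orderOf h = p ^ k → h ∈ A := by
      intro h hh p k hp hord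
      rcases eq_or_ne h 1 with rfl | hne
      · exact A.one_mem
      haveI : Fact p.Prime := ⟨hp⟩
      have hordh' : orderOf (⟨h, hh⟩ : ↥H) = p ^ k := by rw [Subgroup.orderOf_mk, hord]
      have hpg : IsPGroup p (Subgroup.zpowers (⟨h, hh⟩ : ↥H)) :=
        IsPGroup.of_card (by rw [Nat.card_zpowers, hordh'])
      obtain ⟨P, hP⟩ := hpg.exists_le_sylow
      have htfae := (isNilpotent_of_finite_tfae (G := ↥H)).out 0 3
      have hPnormal : (P : Subgroup ↥H).Normal := (htfae.mp hHnil) p ⟨hp⟩ P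
      haveI : (P : Subgroup ↥H).Characteristic := Sylow.characteristic_of_normal P hPnormal
      have hmapnormal : ((P : Subgroup ↥H).map H.subtype).Normal :=
        ConjAct.normal_of_characteristic_of_normal
      have hmappg : IsPGroup p ((P : Subgroup ↥H).map H.subtype) := P.isPGroup'.map _
      have hk0 : k ≠ 0 := by
        rintro rfl
        rw [pow_zero] at hord
        exact hne (orderOf_eq_one_iff.mp hord)
      have hpdvd : p ∣ Fintype.card G := by
        have h1 : p ∣ orderOf h := by rw [hord]; exact dvd_pow_self p hk0
        exact h1.trans orderOf_dvd_card
      exact hOp p hp hpdvd _ hmapnormal hmappg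
        ⟨⟨h, hh⟩, hP (Subgroup.mem_zpowers _), rfl⟩
    intro h hh
    have key : ∀ n : ℕ, ∀ h : G, h ∈ H → n ≠ 0 → orderOf h ∣ n → h ∈ A := by
      intro n
      induction n using Nat.strong_induction_on with
      | _ n ih =>
        intro h hh hn hdvd
        rcases eq_or_ne n 1 with rfl | hn1
        · rw [orderOf_eq_one_iff.mp (Nat.dvd_one.mp hdvd)]
          exact A.one_mem
        have hpp : (n.minFac).Prime := Nat.minFac_prime hn1
        set p := n.minFac with hpdef
        set k := n.factorization p with hkdef
        set m := n / p ^ k with hmdef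
        have hnm : p ^ k * m = n := Nat.ordProj_mul_ordCompl_eq_self n p
        have hcop : Nat.Coprime (p ^ k) m :=
          Nat.Coprime.pow_left k (Nat.coprime_ordCompl hpp hn)
        set U := Nat.gcdA (p ^ k) m with hUdef
        set V := Nat.gcdB (p ^ k) m with hVdef
        have hbez : ((p ^ k : ℕ) : ℤ) * U + (m : ℤ) * V = 1 := by
          have hb := Nat.gcd_eq_gcd_ab (p ^ k) m
          rw [hcop, Nat.cast_one] at hb
          exact hb.symm
        have hsplit : h = h ^ (((p ^ k : ℕ) : ℤ) * U) * h ^ ((m : ℤ) * V) := by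
          rw [← zpow_add, hbez, zpow_one]
        have h1mem : h ^ ((m : ℤ) * V) ∈ H := H.zpow_mem hh _
        have h1ord : orderOf (h ^ ((m : ℤ) * V)) ∣ p ^ k := by
          apply orderOf_dvd_of_pow_eq_one
          rw [← zpow_natCast (h ^ ((m : ℤ) * V)) (p ^ k), ← zpow_mul]
          have e : (m : ℤ) * V * ((p ^ k : ℕ) : ℤ) = (n : ℤ) * V := by
            rw [← hnm]; push_cast; ring
          rw [e, zpow_mul, zpow_natCast, orderOf_dvd_iff_pow_eq_one.mp hdvd, one_zpow]
        obtain ⟨j, _, hj⟩ := (Nat.dvd_prime_pow hpp).mp h1ord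
        have hA1 : h ^ ((m : ℤ) * V) ∈ A := hp_elt _ h1mem p j hpp hj
        have h2mem : h ^ (((p ^ k : ℕ) : ℤ) * U) ∈ H := H.zpow_mem hh _
        have h2ord : orderOf (h ^ (((p ^ k : ℕ) : ℤ) * U)) ∣ m := by
          apply orderOf_dvd_of_pow_eq_one
          rw [← zpow_natCast (h ^ (((p ^ k : ℕ) : ℤ) * U)) m, ← zpow_mul]
          have e : ((p ^ k : ℕ) : ℤ) * U * (m : ℤ) = (n : ℤ) * U := by
            rw [← hnm]; push_cast; ring
          rw [e, zpow_mul, zpow_natCast, orderOf_dvd_iff_pow_eq_one.mp hdvd, one_zpow]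
        have hk0 : k ≠ 0 := by
          have : 0 < k := hpp.factorization_pos_of_dvd hn (Nat.minFac_dvd n)
          exact this.ne'
        have hmlt : m < n := by
          apply Nat.div_lt_self (Nat.pos_of_ne_zero hn)
          exact Nat.one_lt_pow hk0 hpp.one_lt
        have hm0 : m ≠ 0 := (Nat.ordCompl_pos p hn).ne'
        have hA2 : h ^ (((p ^ k : ℕ) : ℤ) * U) ∈ A := ih m hmlt _ h2mem hm0 h2ord
        rw [hsplit]
        exact A.mul_mem hA2 hA1
    exact key (orderOf h) h hh (orderOf_pos h).ne' dvd_rfl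
  -- the join of all normal nilpotent subgroups
  let NN := {Hn : Subgroup G // Hn.Normal ∧ Group.IsNilpotent ↥Hn}
  set F : Subgroup G := ⨆ i : NN, i.1 with hFdef
  have hFA : F ≤ A := iSup_le fun i => hL i.1 i.2.1 i.2.2
  have hHF : ∀ Hn : Subgroup G, Hn.Normal → Group.IsNilpotent ↥Hn → Hn ≤ F :=
    fun Hn h1 h2 => le_iSup (fun i : NN => i.1) ⟨Hn, h1, h2⟩
  have hFnormal : F.Normal := by
    constructor
    intro n hn g
    refine Subgroup.iSup_induction (C := fun y => g * y * g⁻¹ ∈ F) _ hn ?_ ?_ ?_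
    · intro i y hy
      exact hHF i.1 i.2.1 i.2.2 (i.2.1.conj_mem y hy g)
    · simpa using F.one_mem
    · intro y z hy hz
      have e : g * (y * z) * g⁻¹ = (g * y * g⁻¹) * (g * z * g⁻¹) := by group
      rw [e]; exact F.mul_mem hy hz
  set C := Subgroup.centralizer (F : Set G) with hCdef
  have hAC : A ≤ C := fun a ha =>
    Subgroup.mem_centralizer_iff.mpr fun f hf => (hAc f a (hFA hf) ha).eq
  have hCF_cent : ∀ c ∈ C, ∀ f ∈ F, f * c = c * f := fun c hc f hf =>
    Subgroup.mem_centralizer_iff.mp hc f hf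
  have hCnormal : C.Normal := by
    constructor
    intro c hc g
    refine Subgroup.mem_centralizer_iff.mpr fun f hf => ?_
    have hf' : g⁻¹ * f * g ∈ F := by
      have h := hFnormal.conj_mem f hf g⁻¹
      rwa [inv_inv] at h
    have hcomm := hCF_cent c hc _ hf'
    calc f * (g * c * g⁻¹) = g * ((g⁻¹ * f * g) * c) * g⁻¹ := by group
      _ = g * (c * (g⁻¹ * f * g)) * g⁻¹ := by rw [hcomm]
      _ = g * c * g⁻¹ * f := by group
  haveI := hCnormal
  have hMlem : ∀ M : Subgroup G, M.Normal → M ≤ C → ⁅M, M⁆ ≤ F → M ≤ F := by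
    intro M hMn hMC hMF
    refine hHF M hMn ?_
    apply nilpotent_of_commutator_mem_center
    intro u v
    refine Subgroup.mem_center_iff.mpr fun z => ?_
    have hcF : ((u : G) * v * (u : G)⁻¹ * (v : G)⁻¹) ∈ F := by
      have h := hMF (Subgroup.commutator_mem_commutator u.2 v.2)
      rwa [commutatorElement_def] at h
    have hzc : (z : G) ∈ C := hMC z.2
    have h := hCF_cent (z : G) hzc _ hcF
    refine Subtype.ext ?_
    simpa [commutatorElement_def, mul_assoc] using h.symm
  have hTopK : ⁅(⊤ : Subgroup G), (⊤ : Subgroup G)⁆ ≤ K :=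
    Subgroup.commutator_le.mpr fun g _ h _ => hGK g h
  have hKK : ⁅K, K⁆ ≤ (⊥ : Subgroup G) :=
    Subgroup.commutator_le.mpr fun g hg h hh => by
      rw [Subgroup.mem_bot, commutatorElement_eq_one_iff_commute]
      exact hKcomm g hg h hh
  have hCCC : ⁅C, C⁆ ≤ C := Subgroup.commutator_le.mpr fun g hg h hh => by
    rw [commutatorElement_def]
    exact C.mul_mem (C.mul_mem (C.mul_mem hg hh) (C.inv_mem hg)) (C.inv_mem hh)
  have hD1F : ⁅C, C⁆ ≤ F := by
    refine hMlem ⁅C, C⁆ inferInstance hCCC ?_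
    have hCK : ⁅C, C⁆ ≤ K := le_trans (Subgroup.commutator_mono le_top le_top) hTopK
    exact le_trans (le_trans (Subgroup.commutator_mono hCK hCK) hKK) bot_le
  have hCFle : C ≤ F := hMlem C hCnormal le_rfl hD1F
  have hACeq : A = C := le_antisymm hAC (hCFle.trans hFA)
  refine ⟨hACeq ▸ hCnormal, ?_, fun H h1 h2 => hL H h1 h2⟩
  letI : CommGroup ↥A := { (inferInstance : Group ↥A) with mul_comm := hAcomm }
  exact inferInstance
end

section
/- Let p be an odd prime, A = ℤ_p × ℤ_p with basis (a, x), and let d, n ∈ ℤ_p^*, r ∈ {2, …, p−1}. Suppose φ is a skew morphism of A of the form φ(a^i x^j) = a^{ri + (1/2)dj(j−1)rn}(bx^r)^j for some b ∈ ⟨a⟩, with power function π(a^i x^j) ≡ 1 + jnk (mod pk), where k is the multiplicative order of r modulo p and |φ| = pk. Then φ is not smooth: π(φ(x)) ≢ π(x) (mod pk). -/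
theorem stmt17 (p : ℕ) (hp : p.Prime) (hp2 : p ≠ 2)
    (d n r : ℕ) (hd : ¬ p ∣ d) (hn : ¬ p ∣ n) (hr : 2 ≤ r) (hrp : r ≤ p - 1)
    (k : ℕ) (hk : k = orderOf (r : ZMod p))
    (β : ℕ) (φ : Equiv.Perm (ZMod p × ZMod p))
    (hφ : ∀ u : ZMod p × ZMod p,
      φ u = (r * u.1 + (d : ZMod p) * n * r * (u.2 * (u.2 - 1)) * (2 : ZMod p)⁻¹ + u.2 * β,
             r * u.2))
    (hsk : IsAddSkewMorphism φ (fun u => 1 + (u.2.val : ℤ) * n * k))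
    (hord : orderOf φ = p * k) :
    ¬ ((1 + (((φ (0, 1)).2.val : ℤ)) * n * k) ≡
        (1 + ((((0, 1) : ZMod p × ZMod p).2.val : ℤ)) * n * k) [ZMOD ((p * k : ℕ))]) := by
  have hp1 : 1 < p := hp.one_lt
  haveI : Fact (1 < p) := ⟨hp1⟩
  haveI : Fact p.Prime := ⟨hp⟩
  have hrlt : r < p := by omega
  -- compute values
  have hφ2 : (φ (0, 1)).2 = (r : ZMod p) := by
    rw [hφ (0, 1)]; simp
  have hval1 : ((0, 1) : ZMod p × ZMod p).2.val = 1 := ZMod.val_one p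
  have hvalr : (φ (0, 1)).2.val = r := by
    rw [hφ2, ZMod.val_natCast, Nat.mod_eq_of_lt hrlt]
  rw [hvalr, hval1]
  -- k > 0
  have hrne : (r : ZMod p) ≠ 0 := by
    rw [Ne, ZMod.natCast_eq_zero_iff]
    intro h
    exact absurd (Nat.le_of_dvd (by omega) h) (by omega)
  have hk0 : 0 < k := by
    rw [hk]
    have : IsOfFinOrder (r : ZMod p) := by
      refine isOfFinOrder_iff_pow_eq_one.mpr ⟨p - 1, by omega, ?_⟩
      exact ZMod.pow_card_sub_one_eq_one hrne
    exact this.orderOf_pos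
  intro h
  have hdvd : ((p * k : ℕ) : ℤ) ∣ (1 + 1 * n * k) - (1 + (r : ℤ) * n * k) :=
    Int.ModEq.dvd h
  have hdvd2 : (p : ℤ) * k ∣ ((1 : ℤ) - r) * n * k := by
    push_cast at hdvd ⊢
    convert hdvd using 1
    ring
  have hkz : (k : ℤ) ≠ 0 := by exact_mod_cast hk0.ne'
  have hdvd3 : (p : ℤ) ∣ ((1 : ℤ) - r) * n :=
    (mul_dvd_mul_iff_right hkz).mp hdvd2
  have hpr : Prime (p : ℤ) := Nat.prime_iff_prime_int.mp hp
  rcases hpr.dvd_mul.mp hdvd3 with h1 | h2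
  · have h1' : (p : ℤ) ∣ ((r : ℤ) - 1) := by
      have := dvd_neg.mpr h1
      simpa [neg_sub] using this
    have h1'' : (p : ℤ) ∣ ((r - 1 : ℕ) : ℤ) := by
      rwa [Nat.cast_sub (by omega), Nat.cast_one]
    have := Nat.le_of_dvd (by omega) (Int.ofNat_dvd.mp h1'')
    omega
  · exact hn (by exact_mod_cast h2)
end

section
/- Let A be a non-cyclic finite abelian group of order n = 2^f·n₁ with n₁ odd. If every skew morphism of A is smooth, then n₁ is square-free and the Sylow 2-subgroup of A contains no direct factor isomorphic to ℤ_{2^e} for any e ≥ 5. -/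
namespace Skew18


/-- conjugation of permutations by an equivalence, as a monoid hom -/
def permCongrHom {α β : Type*} (g : α ≃ β) : Equiv.Perm α →* Equiv.Perm β where
  toFun σ := (g.symm.trans σ).trans g
  map_one' := by ext x; simp
  map_mul' σ τ := by ext x; simp

@[simp] lemma permCongrHom_apply {α β : Type*} (g : α ≃ β) (σ : Equiv.Perm α) (x : β) :
    permCongrHom g σ x = g (σ (g.symm x)) := rfl

lemma permCongrHom_injective {α β : Type*} (g : α ≃ β) :
    Function.Injective (permCongrHom g) := by
  intro σ τ h
  ext x
  have := congrArg (fun τ' : Equiv.Perm β => g.symm (τ' (g x))) h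
  simpa using this

/-- the product-with-identity monoid hom on permutations -/
def permProdHom (α β : Type*) : Equiv.Perm α →* Equiv.Perm (α × β) where
  toFun σ := Equiv.prodCongr σ (Equiv.refl β)
  map_one' := by ext x <;> simp
  map_mul' σ τ := by ext x <;> simp

@[simp] lemma permProdHom_apply {α β : Type*} (σ : Equiv.Perm α) (x : α × β) :
    permProdHom α β σ x = (σ x.1, x.2) := rfl

lemma permProdHom_injective {α β : Type*} [Nonempty β] :
    Function.Injective (permProdHom α β) := by
  intro σ τ h
  ext x
  obtain ⟨b⟩ := ‹Nonempty β›
  have := congrArg (fun τ' : Equiv.Perm (α × β) => (τ' (x, b)).1) h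
  simpa using this

/-- The master pipeline: an additive "witness" (non-smooth skew morphism data) on `V`
together with an isomorphism `A ≃* Multiplicative V × H` contradicts smoothness of all
skew morphisms of `A`. -/
lemma no_witness {A : Type*} [Group A]
    (hsm : ∀ (φ : Equiv.Perm A) (π : A → ℤ), IsSkewMorphism φ π → IsSmooth φ π)
    {V H : Type*} [AddGroup V] [Group H] (e : A ≃* Multiplicative V × H)
    (σ : Equiv.Perm V) (π : V → ℤ) (h0 : σ 0 = 0)
    (hs : ∀ a b : V, σ (a + b) = σ a + (σ ^ π a) b)
    (a₀ : V) (hne : σ ^ π (σ a₀) ≠ σ ^ π a₀) : False := by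
  classical
  -- the composite injective monoid hom  Perm V →* Perm A
  let F : Equiv.Perm V →* Equiv.Perm A :=
    ((permCongrHom e.symm.toEquiv).comp (permProdHom (Multiplicative V) H)).comp
      (permCongrHom (Multiplicative.ofAdd : V ≃ Multiplicative V))
  have hFinj : Function.Injective F := by
    intro x y h
    exact permCongrHom_injective _ (permProdHom_injective (permCongrHom_injective _ h))
  have hFapply : ∀ (τ : Equiv.Perm V) (x : A),
      F τ x = e.symm (Multiplicative.ofAdd (τ ((e x).1.toAdd)), (e x).2) := by
    intro τ x; rfl
  set φ : Equiv.Perm A := F σ with hφ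
  set πA : A → ℤ := fun x => π ((e x).1.toAdd) with hπA
  have hskew : IsSkewMorphism φ πA := by
    constructor
    · have : e (1 : A) = 1 := map_one e
      rw [hFapply, this]
      simpa [h0] using map_one e.symm
    · intro a b
      have hmul : e (a * b) = e a * e b := map_mul e a b
      have h1 : ((e (a*b)).1).toAdd = ((e a).1).toAdd + ((e b).1).toAdd := by
        rw [hmul]; rfl
      have hz : ∀ (k : ℤ) (x : A), (φ ^ k) x
          = e.symm (Multiplicative.ofAdd ((σ ^ k) ((e x).1.toAdd)), (e x).2) := by
        intro k x
        rw [hφ, ← map_zpow F σ k, hFapply]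
      rw [hFapply, h1, hs]
      rw [hz]
      have : (e (a * b)).2 = (e a).2 * (e b).2 := by rw [hmul]; rfl
      rw [this]
      have : (Multiplicative.ofAdd (σ ((e a).1.toAdd) + (σ ^ π ((e a).1.toAdd)) ((e b).1.toAdd)) : Multiplicative V)
          = Multiplicative.ofAdd (σ ((e a).1.toAdd)) * Multiplicative.ofAdd ((σ ^ π ((e a).1.toAdd)) ((e b).1.toAdd)) := rfl
      rw [this, ← Prod.mk_mul_mk, map_mul e.symm, hFapply]
  have hsmooth := hsm φ πA hskew
  -- evaluate smoothness at the point corresponding to a₀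
  set a1 : A := e.symm (Multiplicative.ofAdd a₀, 1) with ha1
  have he1 : (e a1).1.toAdd = a₀ := by rw [ha1, MulEquiv.apply_symm_apply]; rfl
  have heφ : (e (φ a1)).1.toAdd = σ a₀ := by
    rw [hφ, hFapply, MulEquiv.apply_symm_apply, he1]; rfl
  have h1 : πA (φ a1) = π (σ a₀) := congrArg π heφ
  have h2 : πA a1 = π a₀ := congrArg π he1
  have := hsmooth a1
  rw [h1, h2] at this
  have hpow : φ ^ π (σ a₀) = φ ^ π a₀ := zpow_eq_zpow_iff_modEq.mpr this
  rw [hφ, ← map_zpow F, ← map_zpow F] at hpow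
  exact hne (hFinj hpow)



/-- binomial step for odd primes -/
lemma pow_p_step {p : ℕ} (hp : p.Prime) (hp3 : 3 ≤ p) {i : ℕ} (hi : 1 ≤ i) (u : ℕ) :
    ∃ w, (1 + p^i*u)^p = 1 + p^(i+1)*u + p^(i+2)*w := by
  set m := p^i*u with hm
  have key : (m + 1)^p = ∑ k ∈ Finset.range (p+1), m^k * (p.choose k) := by
    simpa using add_pow m 1 p
  rw [Finset.range_eq_Ico, Finset.sum_eq_sum_Ico_succ_bot (by omega),
    Finset.sum_eq_sum_Ico_succ_bot (by omega)] at key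
  simp only [pow_zero, Nat.choose_zero_right, pow_one, Nat.choose_one_right, one_mul,
    mul_one] at key
  norm_num at key
  have hdvd : p^(i+2) ∣ ∑ k ∈ Finset.Ico (0+1+1) (p+1), m^k * p.choose k := by
    apply Finset.dvd_sum
    intro k hk
    obtain ⟨hk2, hkp⟩ := Finset.mem_Ico.mp hk
    have hmk : m^k = p^(i*k) * u^k := by rw [hm, mul_pow, pow_mul]
    rcases eq_or_lt_of_le (Nat.lt_succ_iff.mp hkp) with heq | hklt
    · -- k = p
      rw [hmk]
      have hk3 : 3 ≤ k := by omega
      have hle : i + 2 ≤ i * k := by nlinarith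
      exact dvd_mul_of_dvd_left (dvd_mul_of_dvd_left (pow_dvd_pow p hle) _) _
    · -- 2 ≤ k < p
      have h1 : p^(i+2) ∣ p^(2*i) * p := by
        rw [← pow_succ]; exact pow_dvd_pow p (by omega)
      refine h1.trans ?_
      rw [hmk, mul_assoc]
      have hle : 2 * i ≤ i * k := by nlinarith
      exact mul_dvd_mul (pow_dvd_pow p hle) (dvd_mul_of_dvd_right (hp.dvd_choose_self (by omega) hklt) _)
    
  obtain ⟨w, hw⟩ := hdvd
  refine ⟨w, ?_⟩
  have : (1 + p^i*u)^p = (m+1)^p := by rw [hm, add_comm]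
  rw [this, key, hw, hm]
  ring

/-- exact lifting-the-exponent for `1 + p`, odd `p` -/
lemma one_add_p_pow {p : ℕ} (hp : p.Prime) (hp3 : 3 ≤ p) (j : ℕ) :
    ∃ v, (1+p)^(p^j) = 1 + p^(j+1)*(1 + p*v) := by
  induction j with
  | zero => exact ⟨0, by ring⟩
  | succ j ih =>
    obtain ⟨v, hv⟩ := ih
    obtain ⟨w, hw⟩ := pow_p_step hp hp3 (i := j+1) (by omega) (1 + p*v)
    refine ⟨v + w, ?_⟩
    have : (1+p)^(p^(j+1)) = ((1+p)^(p^j))^p := by rw [← pow_mul, pow_succ]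
    rw [this, hv, hw]
    ring

/-- exact 2-adic valuation of powers of `81` -/
lemma eightyone_pow (j : ℕ) : ∃ w, Odd w ∧ 81^(2^j) = 1 + 2^(j+4)*w := by
  induction j with
  | zero => exact ⟨5, ⟨2, by norm_num⟩, by norm_num⟩
  | succ j ih =>
    obtain ⟨w, hwodd, hw⟩ := ih
    refine ⟨w + 2^(j+3)*w^2, ?_, ?_⟩
    · rcases hwodd with ⟨t, rfl⟩
      exact ⟨t + 2^(j+2)*(2*t+1)^2, by ring⟩
    · have : (81:ℕ)^(2^(j+1)) = (81^(2^j))^2 := by rw [← pow_mul, pow_succ]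
      rw [this, hw]
      ring

/-- powers of `1 + q` for square-zero `q` -/
lemma one_add_nilsq_pow {R : Type*} [CommRing R] (q : R) (hq : q*q = 0) (k : ℕ) :
    (1+q)^k = 1 + (k:R)*q := by
  induction k with
  | zero => simp
  | succ k ih =>
    rw [pow_succ, ih]
    push_cast
    linear_combination (k:R) * hq



lemma constructionA (p e : ℕ) (hp : p.Prime) (hp3 : 3 ≤ p) (he : 2 ≤ e) :
    ∃ (σ : Equiv.Perm (ZMod (p^e))) (π : ZMod (p^e) → ℤ) (a₀ : ZMod (p^e)),
      σ 0 = 0 ∧ (∀ a b, σ (a+b) = σ a + (σ ^ π a) b) ∧ σ ^ π (σ a₀) ≠ σ ^ π a₀ := by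
  haveI : NeZero (p^e) := ⟨pow_ne_zero _ (by omega)⟩
  haveI : Fact (1 < p^e) := ⟨by
    calc 1 < p := by omega
    _ ≤ p^e := Nat.le_self_pow (by omega) p⟩
  set R := ZMod (p^e) with hR
  let q : R := (p:R)^(e-1)
  let c : R := (1+p)
  let a : R := -c
  have hqp : q * (p:R) = 0 := by
    have h1 : q * (p:R) = (p:R)^e := by
      show (p:R)^(e-1) * (p:R) = (p:R)^e
      rw [← pow_succ]; congr 1; omega
    rw [h1, ← Nat.cast_pow, ZMod.natCast_self]
  have hqq : q * q = 0 := by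
    have h1 : q * q = (p:R)^e * (p:R)^(e-2) := by
      show (p:R)^(e-1) * (p:R)^(e-1) = _
      rw [← pow_add, ← pow_add]; congr 1; omega
    rw [h1, ← Nat.cast_pow, ZMod.natCast_self, zero_mul]
  have hL0 : c^(p^(e-2)) = 1 + q := by
    obtain ⟨v, hv⟩ := one_add_p_pow hp hp3 (e-2)
    have hc := congrArg (Nat.cast : ℕ → R) hv
    push_cast [R] at hc
    have h21 : e-2+1 = e-1 := by omega
    rw [h21] at hc
    show ((1:R)+p)^(p^(e-2)) = 1 + q
    rw [hc]
    show 1 + (p:R)^(e-1) * (1 + (p:R)*v) = 1 + (p:R)^(e-1)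
    linear_combination (v:R) * hqp
  have hL : ∀ k:ℕ, c^(p^(e-2)*k) = 1 + (k:R)*q := by
    intro k
    rw [pow_mul, hL0, one_add_nilsq_pow q hqq]
  have hcu : c^(p^(e-1)) = 1 := by
    have h1 : p^(e-1) = p^(e-2)*p := by rw [← pow_succ]; congr 1; omega
    rw [h1, hL p]
    linear_combination hqp
  let cinv : R := c^(p^(e-1)-1)
  have hci : c * cinv = 1 := by
    show c * c^(p^(e-1)-1) = 1
    rw [← pow_succ']
    have h1 : p^(e-1)-1+1 = p^(e-1) := by
      have : 1 ≤ p^(e-1) := Nat.one_le_iff_ne_zero.mpr (pow_ne_zero _ (by omega))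
      omega
    rw [h1, hcu]
  let φf : R → R := fun x => a*x + q*x^2
  have hφφ : ∀ x, φf (φf x) = (a*a)*x := by
    intro x
    show a*(a*x + q*x^2) + q*(a*x + q*x^2)^2 = (a*a)*x
    linear_combination (x^2*c)*hqp + (2*a*x^3 + q*x^4)*hqq
  have hABone : (cinv*cinv)*(a*a) = 1 := by
    rw [show (cinv*cinv)*(a*a) = (c*cinv)*(c*cinv) by ring, hci, one_mul]
  have hinj : Function.Injective φf := by
    intro x y h
    have h2 := congrArg φf h
    rw [hφφ, hφφ] at h2
    calc x = ((cinv*cinv)*(a*a))*x := by rw [hABone, one_mul]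
    _ = (cinv*cinv)*((a*a)*x) := by ring
    _ = (cinv*cinv)*((a*a)*y) := by rw [h2]
    _ = ((cinv*cinv)*(a*a))*y := by ring
    _ = y := by rw [hABone, one_mul]
  let σ : Equiv.Perm R := Equiv.ofBijective φf (Finite.injective_iff_bijective.mp hinj)
  have hσ : ∀ x, σ x = φf x := fun _ => rfl
  have heven : ∀ (k:ℕ) (x : R), (σ^(2*k)) x = (a*a)^k * x := by
    intro k
    induction k with
    | zero => intro x; simp
    | succ k ih =>
      intro x
      have h1 : σ^(2*(k+1)) = σ^(2*k) * (σ * σ) := by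
        rw [show 2*(k+1) = 2*k+1+1 by omega, pow_succ, pow_succ, mul_assoc]
      rw [h1, Equiv.Perm.mul_apply, Equiv.Perm.mul_apply, ih, hσ, hσ, hφφ]
      ring
  have hoddp : ∀ (k:ℕ) (x : R), (σ^(2*k+1)) x = φf ((a*a)^k * x) := by
    intro k x
    rw [pow_succ', Equiv.Perm.mul_apply, heven, hσ]
  have hpowf : ∀ v : ℕ, (a*a)^(p^(e-2)*((p-1)*v)) = 1 + ((2*((p-1)*v) : ℕ) : R)*q := by
    intro v
    have h2 : (a*a)^(p^(e-2)*((p-1)*v)) = c^(p^(e-2)*(2*((p-1)*v))) := by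
      rw [show (a*a) = c^2 by ring, ← pow_mul]
      congr 1
      ring
    rw [h2, hL]
  refine ⟨σ, fun x => ((1 + 2*(p^(e-2)*((p-1)*x.val)) : ℕ) : ℤ), 1, ?_, ?_, ?_⟩
  · rw [hσ]; show a*0 + q*0^2 = 0; ring
  · -- skew morphism identity
    intro x y
    beta_reduce
    rw [zpow_natCast]
    have hex : 1 + 2*(p^(e-2)*((p-1)*x.val)) = 2*(p^(e-2)*((p-1)*x.val)) + 1 := by omega
    rw [hex, hoddp, hpowf]
    set B : R := ((2*((p-1)*x.val) : ℕ) : R) with hB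
    have hBval : q*B = -(2*q*x) := by
      rw [hB]
      push_cast [R, Nat.cast_sub (show 1 ≤ p by omega)]
      rw [ZMod.natCast_rightInverse x]
      linear_combination (2*x)*hqp
    rw [hσ, hσ]
    show a*(x+y) + q*(x+y)^2 = (a*x + q*x^2) + (a*((1+B*q)*y) + q*((1+B*q)*y)^2)
    linear_combination y*hBval + (B*y)*hqp - (2*B*y^2 + q*B^2*y^2)*hqq
  · -- non-smoothness witness
    intro h
    have Hpow : ∀ v : ℕ, (σ ^ (((1 + 2*(p^(e-2)*((p-1)*v)) : ℕ):ℤ))) (1:R)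
        = a + a*(((2*((p-1)*v) : ℕ):R))*q + q := by
      intro v
      rw [zpow_natCast]
      have hex : 1 + 2*(p^(e-2)*((p-1)*v)) = 2*(p^(e-2)*((p-1)*v)) + 1 := by omega
      rw [hex, hoddp, hpowf]
      set B : R := ((2*((p-1)*v) : ℕ):R)
      show a*((1+B*q)*1) + q*((1+B*q)*1)^2 = a + a*B*q + q
      linear_combination (2*B + B^2*q)*hqq
    have h1 := congrArg (fun τ : Equiv.Perm R => τ 1) h
    simp only [Hpow] at h1
    rw [ZMod.val_one] at h1
    have h2 : a*(((2*((p-1)*(σ 1).val) : ℕ):R))*q = a*(((2*((p-1)*1) : ℕ):R))*q := by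
      linear_combination h1
    have h3 : q*(((2*((p-1)*(σ 1).val) : ℕ):R)) = q*(((2*((p-1)*1) : ℕ):R)) := by
      linear_combination (-cinv)*h2
        + (((((2*((p-1)*1) : ℕ):R)) - (((2*((p-1)*(σ 1).val) : ℕ):R)))*q)*hci
    have hqz : ∀ n : ℤ, q * (n : R) = 0 ↔ (p:ℤ) ∣ n := by
      intro n
      have h4 : q * (n:R) = (((p:ℤ)^(e-1) * n : ℤ) : R) := by push_cast [R]; ring
      rw [h4]
      refine Iff.trans (ZMod.intCast_zmod_eq_zero_iff_dvd _ (p^e)) ?_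
      have h5 : ((p^e : ℕ) : ℤ) = (p:ℤ)^(e-1) * p := by
        push_cast
        rw [← pow_succ]; congr 1; omega
      rw [h5, mul_dvd_mul_iff_left (a := (p:ℤ)^(e-1))
        (pow_ne_zero _ (Nat.cast_ne_zero.mpr (by omega)))]
    have h6 : q * ((((2*((p-1)*(σ 1).val) : ℕ):ℤ) - ((2*((p-1)*1) : ℕ):ℤ) : ℤ) : R) = 0 := by
      push_cast [R]
      push_cast [R] at h3
      linear_combination h3
    have h7 := (hqz _).mp h6
    have h8 : ((2*((p-1)*(σ 1).val) : ℕ) : ZMod p) = ((2*((p-1)*1) : ℕ) : ZMod p) := by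
      have h9 := (ZMod.intCast_zmod_eq_zero_iff_dvd _ p).mpr h7
      push_cast at h9 ⊢
      linear_combination h9
    have hdvd : p ∣ p^e := dvd_pow_self p (by omega)
    have hgv : (((σ 1).val : ℕ) : ZMod p) = -1 := by
      have h9 : (((σ 1).val : ℕ) : ZMod p) = (ZMod.castHom hdvd (ZMod p)) (σ 1) := by
        rw [ZMod.natCast_val, ZMod.castHom_apply]
      rw [h9]
      have hσ1 : σ 1 = a + q := by rw [hσ]; show a*1 + q*1^2 = a + q; ring
      rw [hσ1, map_add]
      have ha' : (ZMod.castHom hdvd (ZMod p)) a = -1 := by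
        show (ZMod.castHom hdvd (ZMod p)) (-(1+(p:R))) = -1
        rw [map_neg, map_add, map_one, map_natCast, ZMod.natCast_self]
        ring
      have hq' : (ZMod.castHom hdvd (ZMod p)) q = 0 := by
        show (ZMod.castHom hdvd (ZMod p)) ((p:R)^(e-1)) = 0
        rw [map_pow, map_natCast, ZMod.natCast_self, zero_pow (by omega : e-1 ≠ 0)]
      rw [ha', hq']
      ring
    have h10 : ((4:ℕ) : ZMod p) = 0 := by
      push_cast [Nat.cast_sub (show 1 ≤ p by omega)] at h8
      rw [ZMod.natCast_self, hgv] at h8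
      push_cast
      linear_combination h8
    have h11 : p ∣ 4 := (ZMod.natCast_eq_zero_iff _ _).mp h10
    rw [show (4:ℕ) = 2*2 by norm_num] at h11
    rcases (Nat.Prime.dvd_mul hp).mp h11 with h12 | h12 <;>
      exact absurd (Nat.le_of_dvd (by norm_num) h12) (by omega)


lemma constructionC (p m₁ m₂ : ℕ) (hp : p.Prime) (hp3 : 3 ≤ p) (h₁ : m₁ = p) (h₂ : m₂ = p) :
    ∃ (σ : Equiv.Perm (ZMod m₁ × ZMod m₂)) (π : ZMod m₁ × ZMod m₂ → ℤ)
      (a₀ : ZMod m₁ × ZMod m₂),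
      σ 0 = 0 ∧ (∀ a b, σ (a+b) = σ a + (σ ^ π a) b) ∧ σ ^ π (σ a₀) ≠ σ ^ π a₀ := by
  subst m₁; subst m₂
  haveI : NeZero p := ⟨by omega⟩
  haveI : Fact (1 < p) := ⟨by omega⟩
  haveI : Fact p.Prime := ⟨hp⟩
  set K := ZMod p with hK
  have h2 : (2:K) ≠ 0 := by
    intro hcon
    have h4 : ((2:ℕ):K) = 0 := by exact_mod_cast hcon
    have h5 := (ZMod.natCast_eq_zero_iff 2 p).mp h4
    have := Nat.le_of_dvd (by norm_num) h5
    omega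
  obtain ⟨i2, hi2⟩ : ∃ i2 : K, (2:K) * i2 = 1 := ⟨(2:K)⁻¹, mul_inv_cancel₀ h2⟩
  let T : K → K := fun x => (x^2 - x) * i2
  have hT : ∀ x u : K, T (x+u) = T x + T u + x*u := by
    intro x u
    show ((x+u)^2 - (x+u))*i2 = (x^2-x)*i2 + (u^2-u)*i2 + x*u
    linear_combination (x*u)*hi2
  have hTneg : ∀ x : K, T (-x) = T x + x := by
    intro x
    show ((-x)^2 - (-x))*i2 = (x^2-x)*i2 + x
    linear_combination x*hi2
  have hT1 : T 1 = 0 := by show ((1:K)^2 - 1)*i2 = 0; ring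
  let φf : K × K → K × K := fun z => (-z.1, -z.2 + T z.1)
  have hφφ : ∀ z, φf (φf z) = (z.1, z.2 + z.1) := by
    intro z
    show (-(-z.1), -(-z.2 + T z.1) + T (-z.1)) = (z.1, z.2 + z.1)
    rw [hTneg]
    exact Prod.ext (by ring) (by ring)
  have hinj : Function.Injective φf := by
    intro z w h
    have h1 : -z.1 = -w.1 := congrArg Prod.fst h
    have h1' : z.1 = w.1 := by linear_combination -h1
    have h2' : -z.2 + T z.1 = -w.2 + T w.1 := congrArg Prod.snd h
    rw [h1'] at h2'
    exact Prod.ext h1' (by linear_combination -h2')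
  let σ : Equiv.Perm (K × K) := Equiv.ofBijective φf (Finite.injective_iff_bijective.mp hinj)
  have hσ : ∀ z, σ z = φf z := fun _ => rfl
  have heven : ∀ (k:ℕ) (z : K × K), (σ^(2*k)) z = (z.1, z.2 + (k:K)*z.1) := by
    intro k
    induction k with
    | zero => intro z; simp
    | succ k ih =>
      intro z
      have h1 : σ^(2*(k+1)) = σ^(2*k) * (σ * σ) := by
        rw [show 2*(k+1) = 2*k+1+1 by omega, pow_succ, pow_succ, mul_assoc]
      rw [h1, Equiv.Perm.mul_apply, Equiv.Perm.mul_apply, hσ, hσ, hφφ, ih]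
      exact Prod.ext rfl (by push_cast; ring)
  have hoddp : ∀ (k:ℕ) (z : K × K), (σ^(2*k+1)) z = φf (z.1, z.2 + (k:K)*z.1) := by
    intro k z
    rw [pow_succ', Equiv.Perm.mul_apply, heven, hσ]
  have hcast : ∀ v:ℕ, (((p-1)*v : ℕ) : K) = -(v:K) := by
    intro v
    push_cast [K, Nat.cast_sub (show 1 ≤ p by omega)]
    rw [ZMod.natCast_self]
    ring
  have hr : ∀ z : K, ((z.val : ℕ) : K) = z := fun z => ZMod.natCast_rightInverse z
  refine ⟨σ, fun z => ((1 + 2*((p-1)*z.1.val) : ℕ) : ℤ), (1, 0), ?_, ?_, ?_⟩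
  · rw [hσ]
    show ((-(0:K), -(0:K) + ((0:K)^2 - 0)*i2) : K × K) = ((0:K), (0:K))
    exact Prod.ext (by ring) (by ring)
  · intro x y
    beta_reduce
    rw [zpow_natCast]
    rw [show 1 + 2*((p-1)*x.1.val) = 2*((p-1)*x.1.val)+1 by omega, hoddp]
    rw [hσ, hσ]
    refine Prod.ext (by show -(x.1+y.1) = -x.1 + -y.1; ring) ?_
    show -(x.2+y.2) + T (x.1+y.1)
        = (-x.2 + T x.1) + (-(y.2 + (((p-1)*x.1.val : ℕ):K)*y.1) + T y.1)
    rw [hcast, hr x.1]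
    linear_combination hT x.1 y.1
  · intro h
    have hσ10 : σ ((1:K), (0:K)) = (-1, 0) := by
      show ((-(1:K), -(0:K) + (((1:K))^2 - 1)*i2) : K × K) = (-1, 0)
      exact Prod.ext rfl (by ring)
    have Hpow : ∀ v : ℕ, (σ ^ (((1 + 2*((p-1)*v) : ℕ):ℤ))) ((1:K), (0:K))
        = (-1, (v:K)) := by
      intro v
      rw [zpow_natCast, show 1 + 2*((p-1)*v) = 2*((p-1)*v)+1 by omega, hoddp]
      show ((-(1:K), -((0:K) + (((p-1)*v : ℕ):K)*1) + ((1:K)^2-1)*i2) : K × K) = (-1, (v:K))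
      rw [hcast]
      exact Prod.ext rfl (by ring)
    have hL := Hpow ((σ ((1:K),(0:K))).1.val)
    have hRr := Hpow ((((1:K),(0:K)) : K × K).1.val)
    have h1 : ((-1 : K), (((σ ((1:K),(0:K))).1.val : ℕ) : K))
        = ((-1 : K), (((((1:K),(0:K)) : K × K).1.val : ℕ) : K)) := by
      rw [← hL, ← hRr]
      exact congrArg (fun τ : Equiv.Perm (K × K) => τ ((1:K),(0:K))) h
    have h2' := congrArg Prod.snd h1
    simp only at h2'
    have hv : ((σ ((1:K),(0:K))).1) = -1 := by rw [hσ10]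
    rw [hv] at h2'
    rw [hr, hr] at h2'
    have h2'' : (-1 : K) = (1:K) := h2'
    exact h2 (by linear_combination -h2'')

lemma constructionB (e : ℕ) (he : 6 ≤ e) :
    ∃ (σ : Equiv.Perm (ZMod (2^e))) (π : ZMod (2^e) → ℤ) (a₀ : ZMod (2^e)),
      σ 0 = 0 ∧ (∀ a b, σ (a+b) = σ a + (σ ^ π a) b) ∧ σ ^ π (σ a₀) ≠ σ ^ π a₀ := by
  haveI : NeZero ((2:ℕ)^e) := ⟨pow_ne_zero _ (by omega)⟩
  haveI : Fact (1 < (2:ℕ)^e) := ⟨by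
    calc 1 < 2 := by omega
    _ ≤ 2^e := Nat.le_self_pow (by omega) 2⟩
  set R := ZMod (2^e) with hR
  obtain ⟨w, hwodd, hw⟩ := eightyone_pow (e-6)
  let q : R := (2:R)^(e-3)
  have h2z : (2:R)^e = 0 := by
    rw [show (2:R) = ((2:ℕ):R) by norm_num, ← Nat.cast_pow, ZMod.natCast_self]
  have hq8 : q * (2:R)^3 = 0 := by
    show (2:R)^(e-3) * (2:R)^3 = 0
    rw [← pow_add, show e-3+3 = e by omega, h2z]
  have hqq : q * q = 0 := by
    show (2:R)^(e-3) * (2:R)^(e-3) = 0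
    rw [← pow_add, show (e-3)+(e-3) = e + (e-6) by omega, pow_add, h2z, zero_mul]
  let Q : R := (2:R)^(e-2) * w
  have hQQ : Q*Q = 0 := by
    show ((2:R)^(e-2) * w) * ((2:R)^(e-2) * w) = 0
    have hz : (2:R)^(e-2) * (2:R)^(e-2) = 0 := by
      rw [← pow_add, show (e-2)+(e-2) = e + (e-4) by omega, pow_add, h2z, zero_mul]
    linear_combination ((w:R)*(w:R)) * hz
  have hqQ : q * Q = 0 := by
    show (2:R)^(e-3) * ((2:R)^(e-2) * w) = 0
    have hz : (2:R)^(e-3) * (2:R)^(e-2) = 0 := by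
      rw [← pow_add, show (e-3)+(e-2) = e + (e-5) by omega, pow_add, h2z, zero_mul]
    linear_combination (w:R) * hz
  have h4' : (2:R)^(e-2)*(2:R)^2 = 0 := by
    rw [← pow_add, show (e-2)+2 = e by omega, h2z]
  have hL0 : (81:R)^(2^(e-6)) = 1 + Q := by
    have hc := congrArg (Nat.cast : ℕ → R) hw
    push_cast [R] at hc
    rw [show e-6+4 = e-2 by omega] at hc
    exact hc
  have hL : ∀ k:ℕ, (81:R)^(2^(e-6)*k) = 1 + (k:R)*Q := by
    intro k; rw [pow_mul, hL0, one_add_nilsq_pow Q hQQ]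
  have h81u : (81:R)^(2^(e-4)) = 1 := by
    have hh : (2:ℕ)^(e-4) = 2^(e-6)*4 := by
      rw [show (4:ℕ) = 2^2 by norm_num, ← pow_add]; congr 1; omega
    rw [hh, hL]
    push_cast
    show 1 + 4*((2:R)^(e-2)*w) = 1
    linear_combination (w:R) * h4'
  let inv81 : R := (81:R)^(2^(e-4)-1)
  have h81i : (81:R) * inv81 = 1 := by
    show (81:R) * (81:R)^(2^(e-4)-1) = 1
    rw [← pow_succ']
    have h1 : 2^(e-4)-1+1 = 2^(e-4) := by
      have : 1 ≤ (2:ℕ)^(e-4) := Nat.one_le_two_pow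
      omega
    rw [h1, h81u]
  let φf : R → R := fun x => 3*x + q*x^2
  have hφφ2 : ∀ x, φf (φf x) = 9*x + 12*q*x^2 := by
    intro x
    show 3*(3*x+q*x^2) + q*(3*x+q*x^2)^2 = 9*x + 12*q*x^2
    linear_combination (6*x^3 + q*x^4)*hqq
  have hφφ4 : ∀ x, φf (φf (φf (φf x))) = 81*x := by
    intro x
    rw [hφφ2, hφφ2]
    linear_combination (135*x^2)*hq8 + (2592*x^3 + 1728*q*x^4)*hqq
  have hinj : Function.Injective φf := by
    intro x y h
    have h4 := congrArg φf (congrArg φf (congrArg φf h))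
    rw [hφφ4, hφφ4] at h4
    calc x = ((81:R)*inv81)*x := by rw [h81i, one_mul]
    _ = inv81*(81*x) := by ring
    _ = inv81*(81*y) := by rw [h4]
    _ = ((81:R)*inv81)*y := by ring
    _ = y := by rw [h81i, one_mul]
  let σ : Equiv.Perm R := Equiv.ofBijective φf (Finite.injective_iff_bijective.mp hinj)
  have hσ : ∀ x, σ x = φf x := fun _ => rfl
  have heven : ∀ (k:ℕ) (x:R), (σ^(4*k)) x = 81^k * x := by
    intro k
    induction k with
    | zero => intro x; simp
    | succ k ih =>
      intro x
      have h1 : σ^(4*(k+1)) = σ^(4*k) * (σ * (σ * (σ * σ))) := by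
        rw [show 4*(k+1) = 4*k+1+1+1+1 by omega, pow_succ, pow_succ, pow_succ, pow_succ,
          mul_assoc, mul_assoc, mul_assoc]
      rw [h1]
      simp only [Equiv.Perm.mul_apply]
      rw [hσ, hσ, hσ, hσ, hφφ4, ih, pow_succ]
      ring
  have hodd4 : ∀ (k:ℕ) (x:R), (σ^(4*k+1)) x = φf (81^k * x) := by
    intro k x
    rw [pow_succ', Equiv.Perm.mul_apply, heven, hσ]
  obtain ⟨s, hs⟩ : ∃ s:ℕ, 9*w^2 = 1 + 4*s := by
    rcases hwodd with ⟨t, rfl⟩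
    exact ⟨9*t^2+9*t+2, by ring⟩
  have h22 : (2:R)*(2:R)^(e-3) = (2:R)^(e-2) := by
    rw [← pow_succ']; congr 1; omega
  have hkey : ∀ v:ℕ, 3*(((3*w*v : ℕ)):R)*Q = 2*q*((v:ℕ):R) := by
    intro v
    show 3*(((3*w*v : ℕ)):R)*((2:R)^(e-2)*w) = 2*(2:R)^(e-3)*((v:ℕ):R)
    have hsc := congrArg (Nat.cast : ℕ → R) hs
    push_cast [R] at hsc ⊢
    linear_combination ((2:R)^(e-2)*(v:R))*hsc + ((s:R)*(v:R))*h4' + (-(v:R))*h22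
  have hr : ∀ z : R, ((z.val : ℕ) : R) = z := fun z => ZMod.natCast_rightInverse z
  refine ⟨σ, fun x => ((1 + 4*(2^(e-6)*(3*w*x.val)) : ℕ) : ℤ), 1, ?_, ?_, ?_⟩
  · rw [hσ]; show 3*0 + q*0^2 = 0; ring
  · intro x y
    beta_reduce
    rw [zpow_natCast,
      show 1+4*(2^(e-6)*(3*w*x.val)) = 4*(2^(e-6)*(3*w*x.val))+1 by omega, hodd4, hL]
    rw [hσ, hσ]
    set m : R := ((3*w*x.val : ℕ):R) with hm
    show 3*(x+y) + q*(x+y)^2 = (3*x + q*x^2) + (3*((1+m*Q)*y) + q*((1+m*Q)*y)^2)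
    have hk := hkey x.val
    rw [hr x] at hk
    rw [← hm] at hk
    linear_combination (-y)*hk - (2*m*y^2)*hqQ - (q*m^2*y^2)*hQQ
  · intro h
    have Hpow : ∀ v:ℕ, (σ ^ (((1+4*(2^(e-6)*(3*w*v)) : ℕ)):ℤ)) (1:R)
        = 3 + 3*((3*w*v : ℕ):R)*Q + q := by
      intro v
      rw [zpow_natCast, show 1+4*(2^(e-6)*(3*w*v)) = 4*(2^(e-6)*(3*w*v))+1 by omega,
        hodd4, hL]
      set m : R := ((3*w*v : ℕ):R)
      show 3*((1+m*Q)*1) + q*((1+m*Q)*1)^2 = 3 + 3*m*Q + q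
      linear_combination (2*m)*hqQ + (q*m^2)*hQQ
    have h1 := congrArg (fun τ : Equiv.Perm R => τ 1) h
    simp only [Hpow] at h1
    rw [ZMod.val_one] at h1
    have h2 : 3*((3*w*(σ 1).val : ℕ):R)*Q = 3*((3*w*1 : ℕ):R)*Q := by linear_combination h1
    rw [hkey, hkey] at h2
    have hqz : ∀ n : ℤ, q*(n:R) = 0 ↔ (8:ℤ) ∣ n := by
      intro n
      have h4 : q*(n:R) = (((2:ℤ)^(e-3) * n : ℤ) : R) := by push_cast [R]; ring
      rw [h4]
      refine Iff.trans (ZMod.intCast_zmod_eq_zero_iff_dvd _ (2^e)) ?_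
      have h5 : ((2^e : ℕ) : ℤ) = (2:ℤ)^(e-3) * 8 := by
        push_cast
        rw [show (8:ℤ) = 2^3 by norm_num, ← pow_add]; congr 1; omega
      rw [h5, mul_dvd_mul_iff_left (a := (2:ℤ)^(e-3)) (pow_ne_zero _ (by norm_num))]
    have h6 : q * (((2*((σ 1).val : ℤ) - 2*(1:ℤ)) : ℤ) : R) = 0 := by
      push_cast [R]
      push_cast [R] at h2
      linear_combination h2
    have h7 := (hqz _).mp h6
    have h8 : (4:ℤ) ∣ ((σ 1).val : ℤ) - 1 := by omega
    have hdvd : (2^2 : ℕ) ∣ 2^e := pow_dvd_pow 2 (by omega)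
    have hv4 : (((σ 1).val : ℕ) : ZMod (2^2)) = 3 := by
      have h9 : (((σ 1).val : ℕ) : ZMod (2^2)) = (ZMod.castHom hdvd (ZMod (2^2))) (σ 1) := by
        rw [ZMod.natCast_val, ZMod.castHom_apply]
      rw [h9]
      have hσ1 : σ 1 = 3 + q := by rw [hσ]; show 3*1 + q*1^2 = 3+q; ring
      rw [hσ1, map_add]
      have hq0 : (ZMod.castHom hdvd (ZMod (2^2))) q = 0 := by
        show (ZMod.castHom hdvd (ZMod (2^2))) ((2:R)^(e-3)) = 0
        rw [map_pow]
        have hc2 : (ZMod.castHom hdvd (ZMod (2^2))) (2:R) = (2 : ZMod (2^2)) := by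
          rw [show (2:R) = ((2:ℕ):R) by norm_num, map_natCast]
          norm_cast
        rw [hc2, show e-3 = 2 + (e-5) by omega, pow_add]
        have h22' : (2 : ZMod (2^2))^2 = 0 := by decide
        rw [h22', zero_mul]
      rw [hq0, add_zero]
      rw [show (3:R) = ((3:ℕ):R) by norm_num, map_natCast]
      norm_cast
    have h10 : ((((σ 1).val : ℤ) - 1 : ℤ) : ZMod (2^2)) = 0 := by
      rw [ZMod.intCast_zmod_eq_zero_iff_dvd]
      exact_mod_cast h8
    push_cast at h10
    rw [hv4] at h10
    revert h10
    decide

def b5f : ZMod (2^5) → ZMod (2^5) := fun x => 3*x + 4*x^2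
def b5g : ZMod (2^5) → ZMod (2^5) := fun y => 11*y + 20*y^2
lemma b5li : ∀ x : ZMod (2^5), b5g (b5f x) = x := by decide
lemma b5ri : ∀ x : ZMod (2^5), b5f (b5g x) = x := by decide
def b5perm : Equiv.Perm (ZMod (2^5)) := ⟨b5f, b5g, b5li, b5ri⟩

lemma constructionB5 :
    ∃ (σ : Equiv.Perm (ZMod (2^5))) (π : ZMod (2^5) → ℤ) (a₀ : ZMod (2^5)),
      σ 0 = 0 ∧ (∀ a b, σ (a+b) = σ a + (σ ^ π a) b) ∧ σ ^ π (σ a₀) ≠ σ ^ π a₀ := by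
  refine ⟨b5perm, fun x => ((1 + 2*(x.val % 4) : ℕ) : ℤ), 1, by decide, ?_, ?_⟩
  · intro a b
    beta_reduce
    rw [zpow_natCast]
    revert b
    revert a
    decide
  · intro h
    have h1 := congrArg (fun τ : Equiv.Perm (ZMod (2^5)) => τ 1) h
    simp only at h1
    rw [zpow_natCast, zpow_natCast] at h1
    revert h1
    decide

/-- additive splitting of a Pi type at one index -/
def piSplitAddEquiv {ι : Type*} [DecidableEq ι] (M : ι → Type*) [∀ i, AddGroup (M i)]
    (i : ι) : (∀ j, M j) ≃+ M i × (∀ j : {j // j ≠ i}, M j) :=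
  ⟨Equiv.piSplitAt i M, fun _ _ => rfl⟩

/-- glue: additive decomposition to multiplicative decomposition -/
def addToMul {A V H' : Type*} [CommGroup A] [AddGroup V] [AddGroup H']
    (j : Additive A ≃+ V × H') : A ≃* Multiplicative V × Multiplicative H' :=
  ((MulEquiv.multiplicativeAdditive A).symm.trans (AddEquiv.toMultiplicative j)).trans
    (MulEquiv.prodMultiplicative V H')

lemma sum_two_cases {ι : Type*} [Fintype ι] (g : ι → ℕ) (h : 2 ≤ ∑ i, g i) :
    (∃ i, 2 ≤ g i) ∨ ∃ i j, i ≠ j ∧ g i = 1 ∧ g j = 1 := by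
  by_cases h1 : ∃ i, 2 ≤ g i
  · left; exact h1
  right
  push_neg at h1
  have h2 : ∃ i, g i ≠ 0 := by
    by_contra hc
    push_neg at hc
    rw [Finset.sum_eq_zero (fun i _ => hc i)] at h
    omega
  obtain ⟨i, hi⟩ := h2
  have hgi : g i = 1 := by have := h1 i; omega
  have h3 : ∃ j, j ≠ i ∧ g j ≠ 0 := by
    by_contra hc
    push_neg at hc
    have hsum : ∑ k, g k = g i :=
      Finset.sum_eq_single_of_mem i (Finset.mem_univ i) (fun j _ hj => hc j hj)
    omega
  obtain ⟨j, hji, hj⟩ := h3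
  exact ⟨i, j, fun hh => hji hh.symm, hgi, by have := h1 j; omega⟩

lemma odd_sq_dvd {A : Type*} [CommGroup A] [Fintype A]
    (hsm : ∀ (φ : Equiv.Perm A) (π : A → ℤ), IsSkewMorphism φ π → IsSmooth φ π)
    (p : ℕ) (hp : p.Prime) (hp3 : 3 ≤ p) (hdvd : p^2 ∣ Fintype.card A) : False := by
  classical
  haveI : Finite (Additive A) := Finite.of_equiv A Additive.ofMul
  obtain ⟨ι, hfin, ps, hprime, es, ⟨iso0⟩⟩ :=
    AddCommGroup.equiv_directSum_zmod_of_finite (Additive A)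
  haveI := hfin
  haveI : ∀ i, NeZero (ps i ^ es i) := fun i => ⟨pow_ne_zero _ (hprime i).pos.ne'⟩
  haveI : DecidableEq ι := Classical.decEq ι
  let iso1 : Additive A ≃+ ∀ i, ZMod (ps i ^ es i) := iso0.trans (DirectSum.addEquivProd _)
  have hcard : Fintype.card A = ∏ i, ps i ^ es i := by
    calc Fintype.card A = Fintype.card (∀ i, ZMod (ps i ^ es i)) :=
        Fintype.card_congr ((Additive.ofMul (α := A)).trans iso1.toEquiv)
    _ = ∏ i, Fintype.card (ZMod (ps i ^ es i)) := Fintype.card_pi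
    _ = ∏ i, ps i ^ es i := Finset.prod_congr rfl (fun i _ => ZMod.card _)
  have hcne : Fintype.card A ≠ 0 := Fintype.card_ne_zero
  have h2f : 2 ≤ (Fintype.card A).factorization p := by
    rw [← hp.pow_dvd_iff_le_factorization hcne]
    exact hdvd
  have hsum : (Fintype.card A).factorization p = ∑ i, (if ps i = p then es i else 0) := by
    rw [hcard, Nat.factorization_prod (fun i _ => pow_ne_zero _ (hprime i).pos.ne')]
    rw [Finsupp.finset_sum_apply]
    exact Finset.sum_congr rfl (fun i _ => by
      rw [Nat.Prime.factorization_pow (hprime i)]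
      exact Finsupp.single_apply)
  rw [hsum] at h2f
  rcases sum_two_cases _ h2f with ⟨i, hi⟩ | ⟨i, j, hij, hi, hj⟩
  · have hpi : ps i = p := by by_contra hc; rw [if_neg hc] at hi; omega
    have hei : 2 ≤ es i := by rwa [if_pos hpi] at hi
    obtain ⟨σ, π, a₀, h0, hs, hne⟩ :=
      constructionA (ps i) (es i) (hprime i) (by rw [hpi]; exact hp3) hei
    let iso2 : Additive A ≃+ ZMod (ps i ^ es i) × (∀ k : {k // k ≠ i}, ZMod (ps k ^ es k)) :=
      iso1.trans (piSplitAddEquiv _ i)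
    exact no_witness hsm (addToMul iso2) σ π h0 hs a₀ hne
  · have hpi : ps i = p := by by_contra hc; rw [if_neg hc] at hi; omega
    have hei : es i = 1 := by rwa [if_pos hpi] at hi
    have hpj : ps j = p := by by_contra hc; rw [if_neg hc] at hj; omega
    have hej : es j = 1 := by rwa [if_pos hpj] at hj
    obtain ⟨σ, π, a₀, h0, hs, hne⟩ := constructionC p (ps i ^ es i) (ps j ^ es j) hp hp3
      (by rw [hpi, hei, pow_one]) (by rw [hpj, hej, pow_one])
    let iso2 : Additive A ≃+ ZMod (ps i ^ es i) × (∀ k : {k // k ≠ i}, ZMod (ps k ^ es k)) :=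
      iso1.trans (piSplitAddEquiv _ i)
    let jj : {k // k ≠ i} := ⟨j, fun hh => hij hh.symm⟩
    let iso3 := piSplitAddEquiv (fun k : {k // k ≠ i} => ZMod (ps k.1 ^ es k.1)) jj
    let iso4 := (iso2.trans ((AddEquiv.refl (ZMod (ps i ^ es i))).prodCongr iso3)).trans
      (AddEquiv.prodAssoc).symm
    exact no_witness hsm (addToMul iso4) σ π h0 hs a₀ hne

end Skew18

theorem stmt18 {A : Type*} [CommGroup A] [Fintype A] (hnc : ¬ IsCyclic A)
    (f n₁ : ℕ) (hcard : Fintype.card A = 2 ^ f * n₁) (hodd : Odd n₁)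
    (hsm : ∀ (φ : Equiv.Perm A) (π : A → ℤ), IsSkewMorphism φ π → IsSmooth φ π) :
    Squarefree n₁ ∧
      ¬ ∃ e : ℕ, 5 ≤ e ∧ ∃ B : Subgroup A,
        Nonempty (A ≃* Multiplicative (ZMod (2 ^ e)) × B) := by
  constructor
  · by_contra hns
    rw [Nat.squarefree_iff_prime_squarefree] at hns
    push_neg at hns
    obtain ⟨pp, hpp, hdvd⟩ := hns
    have hppn : pp.Prime := hpp
    have hp2 : pp ≠ 2 := by
      rintro rfl
      obtain ⟨k, hk⟩ := hodd
      obtain ⟨m, hm⟩ : 2 ∣ n₁ := dvd_of_mul_right_dvd hdvd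
      omega
    have hp3 : 3 ≤ pp := by have := hppn.two_le; omega
    have hcd : pp^2 ∣ Fintype.card A := by
      rw [hcard, pow_two]
      exact hdvd.trans (dvd_mul_left n₁ (2^f))
    exact Skew18.odd_sq_dvd hsm pp hppn hp3 hcd
  · rintro ⟨e, he5, B, ⟨iso⟩⟩
    rcases Nat.lt_or_ge e 6 with h6 | h6
    · have he : e = 5 := by omega
      subst he
      obtain ⟨σ, π, a₀, h0, hs, hne⟩ := Skew18.constructionB5
      exact Skew18.no_witness hsm iso σ π h0 hs a₀ hne
    · obtain ⟨σ, π, a₀, h0, hs, hne⟩ := Skew18.constructionB e h6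
      exact Skew18.no_witness hsm iso σ π h0 hs a₀ hne
end

section
/- Let G = A × B be a finite abelian group with A ≅ ℤ_p × ℤ_p for an odd prime p. Then G admits a skew morphism that is not smooth. -/
theorem stmt19 (p : ℕ) (hp : p.Prime) (hp2 : p ≠ 2)
    {B : Type*} [AddCommGroup B] [Fintype B] :
    ∃ (φ : Equiv.Perm ((ZMod p × ZMod p) × B)) (π : (ZMod p × ZMod p) × B → ℤ),
      IsAddSkewMorphism φ π ∧ ¬ IsAddSmooth φ π := by
  haveI : Fact p.Prime := ⟨hp⟩
  have h2 : (2 : ZMod p) ≠ 0 := by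
    intro h
    have h2' : ((2 : ℕ) : ZMod p) = 0 := by exact_mod_cast h
    have := (ZMod.natCast_eq_zero_iff 2 p).mp h2'
    rcases (Nat.Prime.eq_one_or_self_of_dvd Nat.prime_two p this) with h' | h'
    · exact hp.one_lt.ne' h'
    · exact hp2 h'
  set t : ZMod p := (2 : ZMod p)⁻¹ with htdef
  have ht : (2 : ZMod p) * t = 1 := mul_inv_cancel₀ h2
  set c : ZMod p → ZMod p := fun x => x * (x - 1) * t with hc
  set e : Equiv.Perm (ZMod p × ZMod p) :=
    { toFun := fun u => (-u.1, -u.2 + c u.1)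
      invFun := fun u => (-u.1, -u.2 + c (-u.1))
      left_inv := by
        rintro ⟨x, y⟩
        simp only [hc, Prod.mk.injEq, neg_neg]
        exact ⟨trivial, by ring⟩
      right_inv := by
        rintro ⟨x, y⟩
        simp only [hc, Prod.mk.injEq, neg_neg]
        exact ⟨trivial, by ring⟩ } with he
  set φ : Equiv.Perm ((ZMod p × ZMod p) × B) := Equiv.prodCongr e (Equiv.refl B) with hφ
  have happly : ∀ u : (ZMod p × ZMod p) × B,
      φ u = ((-u.1.1, -u.1.2 + c u.1.1), u.2) := by
    rintro ⟨⟨x, y⟩, z⟩; rfl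
  have hsq : ∀ u : (ZMod p × ZMod p) × B,
      (φ ^ 2) u = ((u.1.1, u.1.2 + u.1.1), u.2) := by
    rintro ⟨⟨x, y⟩, z⟩
    have : (φ ^ 2) ((x, y), z) = φ (φ ((x, y), z)) := by
      rw [sq]; rfl
    rw [this, happly, happly]
    simp only [hc, Prod.mk.injEq, neg_neg]
    refine ⟨⟨trivial, ?_⟩, trivial⟩
    linear_combination x * ht
  have hodd : ∀ n : ℕ, ∀ u : (ZMod p × ZMod p) × B,
      (φ ^ (2 * n + 1)) u = ((-u.1.1, -u.1.2 - (n : ZMod p) * u.1.1 + c u.1.1), u.2) := by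
    intro n
    induction n with
    | zero =>
      rintro ⟨⟨x, y⟩, z⟩
      rw [show 2 * 0 + 1 = 1 by norm_num, pow_one, happly]
      simp
    | succ n ih =>
      rintro ⟨⟨x, y⟩, z⟩
      have hp2 : (φ ^ (2 * (n + 1) + 1)) ((x, y), z)
          = (φ ^ (2 * n + 1)) ((φ ^ 2) ((x, y), z)) := by
        rw [show 2 * (n + 1) + 1 = (2 * n + 1) + 2 by ring, pow_add]
        rfl
      rw [hp2, hsq, ih]
      simp only [Prod.mk.injEq]
      refine ⟨⟨trivial, ?_⟩, trivial⟩
      push_cast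
      ring
  have heven : ∀ n : ℕ, ∀ u : (ZMod p × ZMod p) × B,
      (φ ^ (2 * n)) u = ((u.1.1, u.1.2 + (n : ZMod p) * u.1.1), u.2) := by
    intro n
    induction n with
    | zero => rintro ⟨⟨x, y⟩, z⟩; simp
    | succ n ih =>
      rintro ⟨⟨x, y⟩, z⟩
      have hp2 : (φ ^ (2 * (n + 1))) ((x, y), z)
          = (φ ^ (2 * n)) ((φ ^ 2) ((x, y), z)) := by
        rw [show 2 * (n + 1) = (2 * n) + 2 by ring, pow_add]
        rfl
      rw [hp2, hsq, ih]
      simp only [Prod.mk.injEq]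
      refine ⟨⟨trivial, ?_⟩, trivial⟩
      push_cast
      ring
  have hvalcast : ∀ a : ZMod p, ((a.val : ZMod p)) = a := by
    intro a
    simp [ZMod.natCast_val, ZMod.cast_id]
  set π : (ZMod p × ZMod p) × B → ℤ :=
    fun u => ((2 * (p - u.1.1.val) + 1 : ℕ) : ℤ) with hπ
  have hzpow : ∀ u : (ZMod p × ZMod p) × B, (φ ^ π u) = φ ^ (2 * (p - u.1.1.val) + 1) := by
    intro u
    rw [hπ]
    exact zpow_natCast φ _
  have hncast : ∀ a : ZMod p, (((p - a.val : ℕ)) : ZMod p) = -a := by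
    intro a
    rw [Nat.cast_sub (le_of_lt (ZMod.val_lt a)), ZMod.natCast_self, hvalcast]
    ring
  refine ⟨φ, π, ⟨?_, ?_⟩, ?_⟩
  · -- φ 0 = 0
    rw [show ((0 : (ZMod p × ZMod p) × B)) = (((0 : ZMod p), (0 : ZMod p)), (0 : B)) from rfl,
      happly]
    simp [hc]
  · -- skew morphism identity
    rintro ⟨⟨a, b⟩, z⟩ ⟨⟨x, y⟩, z'⟩
    rw [hzpow, hodd, happly, happly]
    simp only [hncast, Prod.mk.injEq, Prod.mk_add_mk, hc]
    refine ⟨⟨by ring, ?_⟩, trivial⟩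
    linear_combination a * x * ht
  · -- not smooth
    intro hs
    set u0 : (ZMod p × ZMod p) × B := (((1 : ZMod p), (0 : ZMod p)), (0 : B)) with hu0
    have hval1 : (1 : ZMod p).val = 1 := ZMod.val_one p
    have hφu0 : φ u0 = (((-1 : ZMod p), (0 : ZMod p)), (0 : B)) := by
      rw [hu0, happly]
      simp [hc]
    have hvalneg1 : (-1 : ZMod p).val = p - 1 := by
      have h1 : (((p - 1 : ℕ)) : ZMod p) = -1 := by
        rw [Nat.cast_sub hp.one_le, ZMod.natCast_self]
        push_cast
        ring
      rw [← h1, ZMod.val_cast_of_lt (Nat.sub_lt hp.pos one_pos)]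
    have hπu0 : π u0 = ((2 * (p - 1) + 1 : ℕ) : ℤ) := by simp [hπ, hu0, hval1]
    have hπφu0 : π (φ u0) = ((2 * (p - (p - 1)) + 1 : ℕ) : ℤ) := by
      rw [hφu0, hπ]
      simp [hvalneg1]
    have hsub : p - (p - 1) = 1 := by have := hp.one_le; omega
    have hdvd1 : ((orderOf φ : ℤ)) ∣ ((2 * (p - 1) + 1 : ℕ) : ℤ) - ((2 * 1 + 1 : ℕ) : ℤ) := by
      have h := (hs u0).dvd
      rw [hπu0, hπφu0, hsub] at h
      exact h
    have hord2p : orderOf φ ∣ 2 * p := by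
      apply orderOf_dvd_of_pow_eq_one
      apply Equiv.ext
      rintro ⟨⟨x, y⟩, z⟩
      rw [heven p]
      simp [ZMod.natCast_self]
    have hdvd4 : orderOf φ ∣ 4 := by
      have h1 : ((orderOf φ : ℤ)) ∣ (2 * p : ℤ) := by exact_mod_cast hord2p
      have h2 : ((orderOf φ : ℤ)) ∣ (4 : ℤ) := by
        have : ((2 * (p - 1) + 1 : ℕ) : ℤ) - ((2 * 1 + 1 : ℕ) : ℤ) = 2 * p - 4 := by
          have h1p : (1:ℕ) ≤ p := hp.one_le
          push_cast [h1p]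
          ring
        rw [this] at hdvd1
        have := dvd_sub h1 hdvd1
        simpa using this
      exact_mod_cast h2
    have h4 : φ ^ 4 = 1 := orderOf_dvd_iff_pow_eq_one.mp hdvd4
    have h5 : (φ ^ (2 * 2)) u0 = (1 : Equiv.Perm ((ZMod p × ZMod p) × B)) u0 := by
      rw [show 2 * 2 = 4 by norm_num, h4]
    rw [heven 2 u0] at h5
    simp only [hu0, Equiv.Perm.coe_one, id_eq, Prod.mk.injEq, zero_add, mul_one] at h5
    have h6 : ((2 : ℕ) : ZMod p) = 0 := by
      have h := h5.1.2
      simpa using h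
    exact h2 (by exact_mod_cast h6)
end
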